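/- Let h ∈ {1,…,Q} and let φ be a 𝒫*_h-rectifiable Radon measure on G. Then for φ-almost every x ∈ G the set Tan_h(φ,x) is weak-* compact: every sequence of elements of Tan_h(φ,x) admits a subsequence converging, in duality with compactly supported continuous functions, to an element of Tan_h(φ,x). -/

import Mathlib

open MeasureTheory Metric Filter Topology Set
open scoped ENNReal NNReal

/-- A Carnot group, axiomatized: a group which, in exponential coordinates (where `exp = id`,
so that the group identity is the origin), is a finite-dimensional real Lie algebra admitting a
stratification `V₁ ⊕ ⋯ ⊕ V_κ` with `[V₁, Vᵢ] = V_{i+1}`, `[V₁, V_κ] = 0`, `V_κ ≠ 0`,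
equipped with the associated dilations and with a left-invariant homogeneous distance. -/
class CarnotGroup (G : Type*) extends Group G, LieRing G, LieAlgebra ℝ G, MetricSpace G where
  fd : FiniteDimensional ℝ G
  one_eq_zero : (1 : G) = 0
  κ : ℕ
  κ_pos : 0 < κ
  layer : Fin κ → Submodule ℝ G
  layer_iSup : ⨆ i, layer i = ⊤
  layer_indep : iSupIndep layer
  layer_bracket : ∀ i : Fin κ, ∀ hi : (i : ℕ) + 1 < κ,
    Submodule.span ℝ {z : G | ∃ x ∈ layer ⟨0, κ_pos⟩, ∃ y ∈ layer i, z = ⁅x, y⁆}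
      = layer ⟨(i : ℕ) + 1, hi⟩
  layer_last_bracket : ∀ x ∈ layer ⟨0, κ_pos⟩,
    ∀ y ∈ layer ⟨κ - 1, Nat.sub_lt κ_pos one_pos⟩, ⁅x, y⁆ = 0
  layer_last_ne_bot : layer ⟨κ - 1, Nat.sub_lt κ_pos one_pos⟩ ≠ ⊥
  dil : ℝ → G → G
  dil_layer : ∀ (a : ℝ) (i : Fin κ), ∀ x ∈ layer i, dil a x = a ^ ((i : ℕ) + 1) • x
  dil_linear : ∀ a : ℝ, IsLinearMap ℝ (dil a)
  dil_mul : ∀ a : ℝ, 0 < a → ∀ x y : G, dil a (x * y) = dil a x * dil a y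
  dist_leftInvariant : ∀ z x y : G, dist (z * x) (z * y) = dist x y
  dist_dil : ∀ a : ℝ, 0 < a → ∀ x y : G, dist (dil a x) (dil a y) = a * dist x y

namespace Carnot

variable {G : Type*} [CarnotGroup G]

/-- The number of layers of the stratification. -/
noncomputable def kap (G : Type*) [CarnotGroup G] : ℕ := CarnotGroup.κ (G := G)

/-- The homogeneous dimension `Q` of a Carnot group. -/
noncomputable def Qdim (G : Type*) [CarnotGroup G] : ℕ :=
  ∑ i : Fin (kap G), ((i : ℕ) + 1) * Module.finrank ℝ (CarnotGroup.layer (G := G) i)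

/-- The homogeneous norm induced by the distance: `‖x‖ = d(x, e)`. -/
noncomputable def gnorm (x : G) : ℝ := dist x 1

/-- A homogeneous subgroup: a closed subgroup invariant under all dilations. -/
def IsHomogeneous (V : Subgroup G) : Prop :=
  IsClosed (V : Set G) ∧ ∀ a : ℝ, 0 < a → CarnotGroup.dil a '' (V : Set G) = (V : Set G)

/-- `Gr G h`: the homogeneous subgroups of Hausdorff dimension `h`. -/
def Gr (G : Type*) [CarnotGroup G] (h : ℕ) : Set (Subgroup G) :=
  {V | IsHomogeneous V ∧ dimH (V : Set G) = (h : ℝ≥0∞)}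

/-- `V` and `L` are complementary subgroups: `G = V · L` and `V ∩ L = {e}`. -/
def AreComplementary (V L : Subgroup G) : Prop :=
  (∀ g : G, ∃ v ∈ V, ∃ l ∈ L, g = v * l) ∧ (V : Set G) ∩ (L : Set G) = {1}

/-- The complemented Grassmannian `Gr_c(h)`. -/
def GrC (G : Type*) [CarnotGroup G] (h : ℕ) : Set (Subgroup G) :=
  {V | V ∈ Gr G h ∧ ∃ L : Subgroup G, IsHomogeneous L ∧ AreComplementary V L}

/-- The co-normal Grassmannian `Gr_⊴(h)`: homogeneous subgroups admitting a `normal`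
complementary subgroup. -/
def GrN (G : Type*) [CarnotGroup G] (h : ℕ) : Set (Subgroup G) :=
  {V | V ∈ Gr G h ∧ ∃ L : Subgroup G, IsHomogeneous L ∧ L.Normal ∧ AreComplementary V L}

/-- Stratification vector `𝔰(V) = (dim(V₁ ∩ V), …, dim(V_κ ∩ V))`. -/
noncomputable def stratVec (V : Subgroup G) : Fin (kap G) → ℕ :=
  fun i => Module.finrank ℝ
    (Submodule.span ℝ ((V : Set G) ∩ (CarnotGroup.layer (G := G) i : Set G)))

/-- `𝔖(h)`: the set of stratification vectors of elements of `Gr(h)`. -/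
def stratSet (G : Type*) [CarnotGroup G] (h : ℕ) : Set (Fin (kap G) → ℕ) :=
  stratVec '' Gr G h

/-- `Gr_⊴^𝔰(h)`: the co-normal Grassmannian with prescribed stratification vector. -/
def GrNs (G : Type*) [CarnotGroup G] (h : ℕ) (s : Fin (kap G) → ℕ) : Set (Subgroup G) :=
  {V | V ∈ GrN G h ∧ stratVec V = s}

/-- The metric `d_G` on the Grassmannian: Hausdorff distance of the intersections with
the closed unit ball centered at the identity. -/
noncomputable def grDist (V W : Subgroup G) : ℝ :=
  hausdorffDist ((V : Set G) ∩ closedBall (1 : G) 1) ((W : Set G) ∩ closedBall (1 : G) 1)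

/-- The `h`-dimensional spherical Hausdorff measure `S^h`, built from the metric
(Carathéodory) construction with coverings by closed balls, the gauge of a set being
the infimum of `r^h` over closed balls of radius `r` containing it. -/
noncomputable def sphH (G : Type*) [CarnotGroup G] [MeasurableSpace G] [BorelSpace G]
    (h : ℕ) : Measure G :=
  Measure.mkMetric' fun s =>
    ⨅ (x : G) (r : ℝ) (_ : 0 ≤ r) (_ : s ⊆ closedBall x r), (ENNReal.ofReal r) ^ h

/-- The centered Hausdorff pre-measure `C₀^h`. -/
noncomputable def centeredPre (h : ℕ) (E : Set G) : ℝ≥0∞ :=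
  ⨆ (δ : ℝ) (_ : 0 < δ), ⨅ (c : ℕ → G × ℝ) (_ : E ⊆ ⋃ j, closedBall (c j).1 (c j).2)
    (_ : ∀ j, (c j).1 ∈ E) (_ : ∀ j, (c j).2 ≤ δ),
    ∑' j, ENNReal.ofReal ((c j).2) ^ h

/-- The `h`-dimensional centered Hausdorff measure `C^h`, as a set function. -/
noncomputable def centH (h : ℕ) (A : Set G) : ℝ≥0∞ :=
  ⨆ (E : Set G) (_ : E ⊆ A), centeredPre h E

/-- `μ` is (a measure representing) the restriction `C^h ⌞ V`. -/
def IsCHRestrict [MeasurableSpace G] (h : ℕ) (V : Set G) (μ : Measure G) : Prop :=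
  ∀ s : Set G, MeasurableSet s → μ s = centH h (s ∩ V)

/-- The blow-up `r^{-h} T_{x,r} φ`, where `T_{x,r}φ(E) = φ(x · δ_r(E))`. -/
noncomputable def blow [MeasurableSpace G] (φ : Measure G) (x : G) (r : ℝ) (h : ℕ) :
    Measure G :=
  (ENNReal.ofReal r ^ h)⁻¹ • Measure.map (fun p => CarnotGroup.dil r⁻¹ (x⁻¹ * p)) φ

/-- Weak-* convergence of measures, in duality with continuous compactly supported functions. -/
def WeakStar [MeasurableSpace G] (μ : ℕ → Measure G) (ν : Measure G) : Prop :=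
  ∀ f : G → ℝ, Continuous f → HasCompactSupport f →
    Tendsto (fun i => ∫ p, f p ∂(μ i)) atTop (𝓝 (∫ p, f p ∂ν))

/-- The set `Tan_h(φ, x)` of `h`-tangent measures of `φ` at `x`. -/
def Tan [MeasurableSpace G] (h : ℕ) (φ : Measure G) (x : G) : Set (Measure G) :=
  {ν | ∃ r : ℕ → ℝ, (∀ i, 0 < r i) ∧ Tendsto r atTop (𝓝 0) ∧
    WeakStar (fun i => blow φ x (r i) h) ν}

/-- Lower `h`-density `Θ^h_*(φ, x)`. -/
noncomputable def lowDen [MeasurableSpace G] (h : ℕ) (φ : Measure G) (x : G) : ℝ≥0∞ :=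
  liminf (fun r : ℝ => φ (closedBall x r) / ENNReal.ofReal r ^ h) (𝓝[>] (0 : ℝ))

/-- Upper `h`-density `Θ^{h,*}(φ, x)`. -/
noncomputable def upDen [MeasurableSpace G] (h : ℕ) (φ : Measure G) (x : G) : ℝ≥0∞ :=
  limsup (fun r : ℝ => φ (closedBall x r) / ENNReal.ofReal r ^ h) (𝓝[>] (0 : ℝ))

/-- `0 < Θ^h_*(φ,x) ≤ Θ^{h,*}(φ,x) < ∞`. -/
def GoodDensities [MeasurableSpace G] (h : ℕ) (φ : Measure G) (x : G) : Prop :=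
  0 < lowDen h φ x ∧ lowDen h φ x ≤ upDen h φ x ∧ upDen h φ x < ⊤

/-- The flat measures `λ · S^h ⌞ V` with `λ > 0` and `V ∈ 𝒢`. -/
def flatOn (G : Type*) [CarnotGroup G] [MeasurableSpace G] [BorelSpace G]
    (h : ℕ) (𝒢 : Set (Subgroup G)) : Set (Measure G) :=
  {ν | ∃ lam : ℝ, 0 < lam ∧ ∃ V ∈ 𝒢,
    ν = ENNReal.ofReal lam • (sphH G h).restrict (V : Set G)}

/-- `φ` is a `𝒫*_h`-rectifiable measure. -/
def PStarRect (G : Type*) [CarnotGroup G] [MeasurableSpace G] [BorelSpace G]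
    (h : ℕ) (φ : Measure G) : Prop :=
  ∀ᵐ x ∂φ, GoodDensities h φ x ∧ Tan h φ x ⊆ flatOn G h (Gr G h)

/-- The constant `C(V, L)`: the largest constant `c` such that
`c · ‖P_L(g)‖ ≤ dist(g, V)` for every `g`. -/
noncomputable def splitConst (V L : Subgroup G) : ℝ :=
  sSup {c : ℝ | ∀ g v l : G, v ∈ V → l ∈ L → g = v * l →
    c * gnorm l ≤ infDist g (V : Set G)}

/-- `𝔢(V) = sup { C(V, L)/2 : L a normal complementary subgroup of V }`. -/
noncomputable def eConst (V : Subgroup G) : ℝ :=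
  sSup {e : ℝ | ∃ L : Subgroup G, IsHomogeneous L ∧ L.Normal ∧ AreComplementary V L ∧
    e = splitConst V L / 2}

/-- `PV`, `PL` are the splitting projections of the decomposition `G = V · L`. -/
def IsSplitting (V L : Subgroup G) (PV PL : G → G) : Prop :=
  ∀ g : G, PV g ∈ V ∧ PL g ∈ L ∧ g = PV g * PL g

/-- The intrinsic cone `C_W(α) = {w : dist(w, W) ≤ α ‖w‖}`. -/
def cone (W : Subgroup G) (α : ℝ) : Set G :=
  {w : G | infDist w (W : Set G) ≤ α * gnorm w}

/-- Left translation of a set. -/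
def lTrans (x : G) (S : Set G) : Set G := (fun p => x * p) '' S

/-- The set `E(θ, γ)` relative to a measure `φ` supported on the compact set `K`. -/
def EsetK [MeasurableSpace G] (φ : Measure G) (K : Set G) (h θ γ : ℕ) : Set G :=
  {x | x ∈ K ∧ ∀ r : ℝ, 0 < r → r < 1 / γ →
    (θ : ℝ≥0∞)⁻¹ * ENNReal.ofReal r ^ h ≤ φ (closedBall x r) ∧
      φ (closedBall x r) ≤ (θ : ℝ≥0∞) * ENNReal.ofReal r ^ h}

/-- `F_K(φ, ψ)`: sup of `|∫ f dφ − ∫ f dψ|` over nonnegative `1`-Lipschitz functions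
supported in `K`. -/
noncomputable def FK [MeasurableSpace G] (K : Set G) (φ ψ : Measure G) : ℝ :=
  sSup {v : ℝ | ∃ f : G → ℝ, LipschitzWith 1 f ∧ (∀ x, 0 ≤ f x) ∧ tsupport f ⊆ K ∧
    v = |∫ x, f x ∂φ - ∫ x, f x ∂ψ|}

/-- `d_{x,r}(φ, 𝔐(h, 𝒢))`. -/
noncomputable def dxr (G : Type*) [CarnotGroup G] [MeasurableSpace G] [BorelSpace G]
    (h : ℕ) (φ : Measure G) (x : G) (r : ℝ) (𝒢 : Set (Subgroup G)) : ℝ :=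
  sInf {v : ℝ | ∃ Θ : ℝ, 0 < Θ ∧ ∃ V ∈ 𝒢,
    v = FK (closedBall x r) φ
      (ENNReal.ofReal Θ • (sphH G h).restrict (lTrans x (V : Set G))) / r ^ (h + 1)}

end Carnot

open Carnot MeasureTheory Metric Filter Topology Set
open scoped ENNReal NNReal


namespace CarnotAux

set_option linter.unusedSectionVars false

open CarnotGroup Carnot

variable {G : Type*} [CarnotGroup G]

lemma dil_zero (a : ℝ) : dil a (0 : G) = 0 :=
  (CarnotGroup.dil_linear (G := G) a).map_zero

lemma dil_one (a : ℝ) : dil a (1 : G) = 1 := by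
  rw [CarnotGroup.one_eq_zero (G := G)]; exact dil_zero a

lemma dil_dil (a b : ℝ) (x : G) : dil a (dil b x) = dil (a * b) x := by
  have hx : x ∈ ⨆ i, CarnotGroup.layer (G := G) i := by
    rw [CarnotGroup.layer_iSup]; trivial
  refine Submodule.iSup_induction (motive := fun z : G => dil a (dil b z) = dil (a * b) z)
    _ hx ?_ ?_ ?_
  · intro i y hy
    have h1 : dil b y = b ^ ((i : ℕ) + 1) • y := CarnotGroup.dil_layer b i y hy
    have h2 : dil a y = a ^ ((i : ℕ) + 1) • y := CarnotGroup.dil_layer a i y hy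
    have h3 : dil (a * b) y = (a * b) ^ ((i : ℕ) + 1) • y :=
      CarnotGroup.dil_layer (a * b) i y hy
    rw [h1, (CarnotGroup.dil_linear (G := G) a).map_smul, h2, h3, smul_smul, mul_pow, mul_comm]
  · show dil a (dil b (0 : G)) = dil (a * b) (0 : G)
    rw [dil_zero, dil_zero, dil_zero]
  · intro u v hu hv
    show dil a (dil b (u + v)) = dil (a * b) (u + v)
    rw [(CarnotGroup.dil_linear (G := G) b).map_add,
      (CarnotGroup.dil_linear (G := G) a).map_add, hu, hv,
      (CarnotGroup.dil_linear (G := G) (a * b)).map_add]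

lemma dil_id (x : G) : dil 1 x = x := by
  have hx : x ∈ ⨆ i, CarnotGroup.layer (G := G) i := by
    rw [CarnotGroup.layer_iSup]; trivial
  refine Submodule.iSup_induction (motive := fun z : G => dil 1 z = z) _ hx ?_ ?_ ?_
  · intro i y hy
    rw [CarnotGroup.dil_layer 1 i y hy, one_pow, one_smul]
  · show dil 1 (0 : G) = (0 : G)
    exact dil_zero 1
  · intro u v hu hv
    show dil 1 (u + v) = u + v
    rw [(CarnotGroup.dil_linear (G := G) 1).map_add, hu, hv]

lemma dist_inv_mul_one (x p : G) : dist (x⁻¹ * p) 1 = dist p x := by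
  have h := CarnotGroup.dist_leftInvariant x (x⁻¹ * p) 1
  rw [mul_inv_cancel_left, mul_one] at h
  exact h.symm

lemma dist_dil_one {a : ℝ} (ha : 0 < a) (u : G) : dist (dil a u) 1 = a * dist u 1 := by
  calc dist (dil a u) 1 = dist (dil a u) (dil a 1) := by rw [dil_one]
    _ = a * dist u 1 := CarnotGroup.dist_dil a ha u 1

lemma lipschitz_mul_left (x : G) : LipschitzWith 1 (fun p => x * p) := by
  refine LipschitzWith.of_dist_le_mul fun p q => ?_
  rw [CarnotGroup.dist_leftInvariant x p q, NNReal.coe_one, one_mul]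

lemma lipschitz_dil {a : ℝ} (ha : 0 < a) : LipschitzWith (Real.toNNReal a) (dil (G := G) a) := by
  refine LipschitzWith.of_dist_le_mul fun p q => ?_
  rw [CarnotGroup.dist_dil a ha p q, Real.coe_toNNReal _ ha.le]

lemma continuous_affD (x y : G) {a : ℝ} (ha : 0 < a) :
    Continuous (fun q : G => y * dil a (x⁻¹ * q)) :=
  ((lipschitz_mul_left y).continuous.comp (lipschitz_dil ha).continuous).comp
    (lipschitz_mul_left x⁻¹).continuous

lemma continuous_T (x : G) {r : ℝ} (hr : 0 < r) :
    Continuous (fun p : G => dil r⁻¹ (x⁻¹ * p)) :=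
  (lipschitz_dil (inv_pos.2 hr)).continuous.comp (lipschitz_mul_left x⁻¹).continuous

lemma dist_shiftDil (x y : G) {a : ℝ} (ha : 0 < a) (q : G) :
    dist (y * dil a (x⁻¹ * q)) y = a * dist q x := by
  have h1 := CarnotGroup.dist_leftInvariant y (dil a (x⁻¹ * q)) 1
  rw [mul_one] at h1
  rw [h1, dist_dil_one ha, dist_inv_mul_one]

lemma affD_affD (x y : G) {a : ℝ} (ha : a ≠ 0) (q : G) :
    y * dil a (x⁻¹ * (x * dil a⁻¹ (y⁻¹ * q))) = q := by
  rw [inv_mul_cancel_left, dil_dil, mul_inv_cancel₀ ha, dil_id, mul_inv_cancel_left]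

/-- Image of a closed ball under the affine-dilation map. -/
lemma image_shiftDil_closedBall (x y : G) {a : ℝ} (ha : 0 < a) {t : ℝ} :
    (fun q : G => y * dil a (x⁻¹ * q)) '' (Metric.closedBall x t) =
      Metric.closedBall y (a * t) := by
  ext q'
  simp only [Set.mem_image, Metric.mem_closedBall]
  constructor
  · rintro ⟨q, hq, rfl⟩
    rw [dist_shiftDil x y ha q]
    exact mul_le_mul_of_nonneg_left hq ha.le
  · intro hq'
    refine ⟨x * dil a⁻¹ (y⁻¹ * q'), ?_, affD_affD x y ha.ne' q'⟩
    rw [dist_shiftDil y x (inv_pos.2 ha) q']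
    calc a⁻¹ * dist q' y ≤ a⁻¹ * (a * t) :=
          mul_le_mul_of_nonneg_left hq' (inv_nonneg.2 ha.le)
      _ = t := by field_simp

lemma isCompact_closedBall_transfer {p0 : G} {t : ℝ} (ht : 0 < t)
    (hK : IsCompact (Metric.closedBall p0 t)) (y : G) (s : ℝ) :
    IsCompact (Metric.closedBall y s) := by
  rcases le_or_gt s 0 with hs | hs
  · rcases eq_or_lt_of_le hs with hs0 | hs0
    · rw [hs0, Metric.closedBall_zero]
      exact isCompact_singleton
    · rw [Metric.closedBall_eq_empty.2 hs0]
      exact isCompact_empty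
  · have himg := image_shiftDil_closedBall p0 y (a := s / t) (div_pos hs ht) (t := t)
    rw [div_mul_cancel₀ _ ht.ne'] at himg
    rw [← himg]
    exact hK.image (continuous_affD p0 y (div_pos hs ht))

lemma exists_compact_ball_of_ne_zero {f : G → ℝ} (hf : Continuous f)
    (hcs : HasCompactSupport f) {p0 : G} (hp0 : f p0 ≠ 0) :
    ∃ t > 0, IsCompact (Metric.closedBall p0 t) := by
  have hU : IsOpen {p : G | |f p0| / 2 < |f p|} :=
    isOpen_lt continuous_const (continuous_abs.comp hf)
  have hp0U : p0 ∈ {p : G | |f p0| / 2 < |f p|} := by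
    simp only [Set.mem_setOf_eq]
    have : 0 < |f p0| := abs_pos.2 hp0
    linarith
  obtain ⟨ε, hε, hball⟩ := Metric.isOpen_iff.1 hU p0 hp0U
  refine ⟨ε / 2, by linarith, ?_⟩
  refine hcs.of_isClosed_subset Metric.isClosed_closedBall ?_
  intro p hp
  have hpU : p ∈ {p : G | |f p0| / 2 < |f p|} := by
    apply hball
    rw [Metric.mem_ball]
    calc dist p p0 ≤ ε / 2 := hp
      _ < ε := by linarith
  have hfp : f p ≠ 0 := by
    intro h0
    simp only [Set.mem_setOf_eq, h0, abs_zero] at hpU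
    have : 0 < |f p0| := abs_pos.2 hp0
    linarith
  exact subset_closure (by simpa [Function.mem_support] using hfp)

section MeasureAux

variable [MeasurableSpace G] [BorelSpace G]

lemma T_S (x : G) {r : ℝ} (hr : r ≠ 0) (q : G) :
    dil r⁻¹ (x⁻¹ * (x * dil r q)) = q := by
  rw [inv_mul_cancel_left, dil_dil, inv_mul_cancel₀ hr, dil_id]

lemma S_T (x : G) {r : ℝ} (hr : r ≠ 0) (p : G) :
    x * dil r (dil r⁻¹ (x⁻¹ * p)) = p := by
  rw [dil_dil, mul_inv_cancel₀ hr, dil_id, mul_inv_cancel_left]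

lemma continuous_S (x : G) {r : ℝ} (hr : 0 < r) :
    Continuous (fun q : G => x * dil r q) :=
  (lipschitz_mul_left x).continuous.comp (lipschitz_dil hr).continuous

lemma preimage_T_closedBall (x : G) {r : ℝ} (hr : 0 < r) (ρ : ℝ) :
    (fun p : G => dil r⁻¹ (x⁻¹ * p)) ⁻¹' (Metric.closedBall 1 ρ)
      = Metric.closedBall x (r * ρ) := by
  ext p
  simp only [Set.mem_preimage, Metric.mem_closedBall]
  rw [dist_dil_one (inv_pos.2 hr), dist_inv_mul_one, inv_mul_le_iff₀ hr]

lemma preimage_T_eq_image (x : G) {r : ℝ} (hr : r ≠ 0) (K : Set G) :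
    (fun p : G => dil r⁻¹ (x⁻¹ * p)) ⁻¹' K = (fun q : G => x * dil r q) '' K := by
  ext p
  constructor
  · intro hp
    exact ⟨dil r⁻¹ (x⁻¹ * p), hp, S_T x hr p⟩
  · rintro ⟨q, hq, rfl⟩
    simpa only [Set.mem_preimage, T_S x hr q] using hq

lemma blow_apply_closedBall (φ : Measure G) (x : G) {r : ℝ} (hr : 0 < r) (h' : ℕ) (ρ : ℝ) :
    blow φ x r h' (Metric.closedBall 1 ρ)
      = (ENNReal.ofReal r ^ h')⁻¹ * φ (Metric.closedBall x (r * ρ)) := by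
  rw [Carnot.blow, Measure.smul_apply,
    Measure.map_apply (continuous_T x hr).measurable Metric.isClosed_closedBall.measurableSet,
    preimage_T_closedBall x hr ρ, smul_eq_mul]

lemma blow_fmoc (φ : Measure G) [IsFiniteMeasureOnCompacts φ] (x : G) {r : ℝ} (hr : 0 < r)
    (h' : ℕ) : IsFiniteMeasureOnCompacts (blow φ x r h') := by
  constructor
  intro K hK
  rw [Carnot.blow, Measure.smul_apply,
    Measure.map_apply (continuous_T x hr).measurable hK.isClosed.measurableSet,
    preimage_T_eq_image x hr.ne' K, smul_eq_mul]
  refine ENNReal.mul_lt_top ?_ ((hK.image (continuous_S x hr)).measure_lt_top)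
  exact lt_top_iff_ne_top.2 (ENNReal.inv_ne_top.2 (pow_ne_zero _ (ENNReal.ofReal_pos.2 hr).ne'))

lemma abs_integral_le_of_support_subset {μ : Measure G} {f : G → ℝ} (hf : Continuous f)
    {s : Set G} (hsm : MeasurableSet s) (hsupp : tsupport f ⊆ s) (hμs : μ s ≠ ⊤)
    {M : ℝ} (hM : ∀ p, |f p| ≤ M) :
    |∫ p, f p ∂μ| ≤ M * (μ s).toReal := by
  rw [← MeasureTheory.setIntegral_eq_integral_of_forall_compl_eq_zero
    (fun p hp => image_eq_zero_of_notMem_tsupport (fun hc => hp (hsupp hc)))]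
  have := MeasureTheory.norm_setIntegral_le_of_norm_le_const (μ := μ) (s := s) (f := f)
    hμs.lt_top (fun p _ => by simpa [Real.norm_eq_abs] using hM p)
  simpa [Real.norm_eq_abs, MeasureTheory.measureReal_def] using this

lemma exists_abs_bound {f : G → ℝ} (hf : Continuous f) (hcs : HasCompactSupport f) :
    ∃ M : ℝ, 0 ≤ M ∧ ∀ p, |f p| ≤ M := by
  rcases Set.eq_empty_or_nonempty (tsupport f) with he | hne
  · refine ⟨0, le_refl 0, fun p => ?_⟩
    have : f p = 0 := image_eq_zero_of_notMem_tsupport (by rw [he]; exact Set.notMem_empty p)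
    simp [this]
  · obtain ⟨y, _, hy⟩ := hcs.exists_isMaxOn hne ((continuous_abs.comp hf).continuousOn)
    refine ⟨|f y|, abs_nonneg _, fun p => ?_⟩
    by_cases hp : p ∈ tsupport f
    · exact hy hp
    · rw [image_eq_zero_of_notMem_tsupport hp, abs_zero]
      exact abs_nonneg _

lemma exists_nat_tsupport_subset {f : G → ℝ} (hcs : HasCompactSupport f) :
    ∃ n : ℕ, 0 < n ∧ tsupport f ⊆ Metric.closedBall 1 n := by
  obtain ⟨R, hR⟩ := (Metric.isBounded_iff_subset_closedBall (1 : G)).1 hcs.isBounded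
  refine ⟨⌈R⌉₊ + 1, Nat.succ_pos _, hR.trans (Metric.closedBall_subset_closedBall ?_)⟩
  push_cast
  calc R ≤ ⌈R⌉₊ := Nat.le_ceil R
    _ ≤ ⌈R⌉₊ + 1 := by linarith

end MeasureAux

section Helpers

/-- The basic cutoff function at radius `R`. -/
noncomputable def cutf (R : ℝ) (p : G) : ℝ := max 0 (min 1 (R - dist p 1))

lemma cutf_continuous (R : ℝ) : Continuous (cutf (G := G) R) :=
  continuous_const.max (continuous_const.min
    (continuous_const.sub (continuous_id.dist continuous_const)))

lemma cutf_nonneg (R : ℝ) (p : G) : 0 ≤ cutf R p := le_max_left _ _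

lemma cutf_le_one (R : ℝ) (p : G) : cutf R p ≤ 1 :=
  max_le zero_le_one (min_le_left _ _)

lemma cutf_eq_one {R : ℝ} {p : G} (hp : dist p 1 ≤ R - 1) : cutf R p = 1 := by
  rw [cutf, min_eq_left (by linarith), max_eq_right zero_le_one]

lemma cutf_eq_zero {R : ℝ} {p : G} (hp : R ≤ dist p 1) : cutf R p = 0 := by
  rw [cutf, max_eq_left ((min_le_right _ _).trans (by linarith))]

lemma cutf_tsupport (R : ℝ) : tsupport (cutf (G := G) R) ⊆ Metric.closedBall 1 R := by
  apply closure_minimal ?_ Metric.isClosed_closedBall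
  intro p hp
  rw [Function.mem_support] at hp
  rw [Metric.mem_closedBall]
  by_contra hb
  exact hp (cutf_eq_zero (le_of_not_ge (by simpa [dist_comm] using hb)))

lemma cutf_hcs (R : ℝ) (hc : IsCompact (Metric.closedBall (1 : G) R)) :
    HasCompactSupport (cutf (G := G) R) :=
  IsCompact.of_isClosed_subset hc (isClosed_tsupport _) (cutf_tsupport R)

lemma tsupport_sub_subset (f g : G → ℝ) :
    tsupport (fun p => f p - g p) ⊆ tsupport f ∪ tsupport g := by
  refine closure_minimal ?_ ((isClosed_tsupport f).union (isClosed_tsupport g))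
  intro p hp
  rw [Function.mem_support] at hp
  by_contra hb
  simp only [Set.mem_union, not_or] at hb
  exact hp (by rw [image_eq_zero_of_notMem_tsupport hb.1,
    image_eq_zero_of_notMem_tsupport hb.2, sub_zero])

lemma sum_clamp {ε : ℝ} (hε : 0 ≤ ε) {t : ℝ} (ht : 0 ≤ t) (N : ℕ) :
    ∑ k ∈ Finset.range N, min (max (t - (k : ℝ) * ε) 0) ε = min t ((N : ℝ) * ε) := by
  induction N with
  | zero => simp [min_eq_right ht]
  | succ n ih =>
    rw [Finset.sum_range_succ, ih]
    push_cast
    rcases le_total t ((n : ℝ) * ε) with hc | hc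
    · have h1 : t - (n : ℝ) * ε ≤ 0 := by linarith
      rw [max_eq_right h1, min_eq_left hε, min_eq_left hc, min_eq_left (by nlinarith), add_zero]
    · rw [min_eq_right hc]
      rcases le_total t (((n : ℝ) + 1) * ε) with h2 | h2
      · rw [min_eq_left h2, max_eq_left (by linarith), min_eq_left (by nlinarith)]
        ring
      · rw [min_eq_right h2, max_eq_left (by linarith), min_eq_right (by nlinarith)]
        ring

end Helpers

end CarnotAux

open CarnotAux
open scoped Uniformity

set_option maxHeartbeats 2000000

/-- **Weak-* compactness of the set of tangent measures.** If `φ` is a `𝒫*_h`-rectifiable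
Radon measure on a Carnot group `G`, then for `φ`-almost every `x` every sequence of tangent
measures of `φ` at `x` admits a subsequence converging weakly-* (in duality with continuous
compactly supported functions) to a tangent measure of `φ` at `x`. -/
theorem tangent_measures_weakstar_compact
    (G : Type*) [CarnotGroup G] [MeasurableSpace G] [BorelSpace G]
    (h : ℕ) (h1 : 1 ≤ h) (hQ : h ≤ Qdim G)
    (φ : Measure G) [IsFiniteMeasureOnCompacts φ]
    (hφ : PStarRect G h φ) :
    ∀ᵐ x ∂φ, ∀ ν : ℕ → Measure G, (∀ i, ν i ∈ Tan h φ x) →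
      ∃ σ : ℕ → ℕ, StrictMono σ ∧ ∃ ν' ∈ Tan h φ x, WeakStar (fun i => ν (σ i)) ν' := by
  classical
  filter_upwards [hφ] with x hx
  intro ν hν
  by_cases hall : ∀ f : G → ℝ, Continuous f → HasCompactSupport f → ∀ p, f p = 0
  · refine ⟨id, strictMono_id, ν 0, hν 0, fun f hf hfs => ?_⟩
    have h0 : f = fun _ => (0 : ℝ) := funext (hall f hf hfs)
    subst h0
    simpa using tendsto_const_nhds
  push_neg at hall
  obtain ⟨f0, hf0c, hf0s, p0, hp0⟩ := hall
  obtain ⟨t0, ht0, htc⟩ := exists_compact_ball_of_ne_zero hf0c hf0s hp0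
  haveI hProper : ProperSpace G := ⟨fun y s => isCompact_closedBall_transfer ht0 htc y s⟩
  -- upper density bound
  have hup : upDen h φ x < ⊤ := hx.1.2.2
  have hevup : ∀ᶠ r in 𝓝[>] (0 : ℝ),
      φ (closedBall x r) / ENNReal.ofReal r ^ h < upDen h φ x + 1 :=
    Filter.eventually_lt_of_limsup_lt (ENNReal.lt_add_right hup.ne one_ne_zero)
  obtain ⟨ε₀, hε₀, hsub⟩ := Metric.mem_nhdsWithin_iff.1 hevup
  set rbar : ℝ := ε₀ / 2 with hrbardef
  have hrbar : 0 < rbar := by positivity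
  have hball : ∀ r : ℝ, 0 < r → r ≤ rbar →
      φ (closedBall x r) ≤ (upDen h φ x + 1) * ENNReal.ofReal r ^ h := by
    intro r hr hrle
    have hmem : r ∈ Metric.ball (0 : ℝ) ε₀ ∩ Set.Ioi 0 := by
      constructor
      · rw [Metric.mem_ball, Real.dist_eq, sub_zero, abs_of_pos hr]
        calc r ≤ rbar := hrle
          _ < ε₀ := by rw [hrbardef]; linarith
      · exact hr
    have hlt : φ (closedBall x r) / ENNReal.ofReal r ^ h < upDen h φ x + 1 := hsub hmem
    have hd0 : (ENNReal.ofReal r ^ h) ≠ 0 := pow_ne_zero _ (ENNReal.ofReal_pos.2 hr).ne'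
    have hdt : (ENNReal.ofReal r ^ h) ≠ ⊤ := ENNReal.pow_ne_top ENNReal.ofReal_ne_top
    exact ((ENNReal.div_lt_iff (Or.inl hd0) (Or.inl hdt)).1 hlt).le
  -- lower density bound
  have hlow0 : 0 < lowDen h φ x := hx.1.1
  set b : ℝ≥0∞ := min (lowDen h φ x) 1 / 2 with hbdef
  have hm0 : min (lowDen h φ x) 1 ≠ 0 := (lt_min hlow0 zero_lt_one).ne'
  have hb0 : b ≠ 0 := (ENNReal.div_pos hm0 (by norm_num)).ne'
  have hbt : b ≠ ⊤ :=
    (lt_of_le_of_lt (ENNReal.half_le_self.trans (min_le_right _ _)) ENNReal.one_lt_top).ne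
  have hblt : b < lowDen h φ x :=
    lt_of_lt_of_le (ENNReal.half_lt_self hm0 (by
      exact ((min_le_right _ _).trans_lt ENNReal.one_lt_top).ne)) (min_le_left _ _)
  have hevlow : ∀ᶠ r in 𝓝[>] (0 : ℝ),
      b < φ (closedBall x r) / ENNReal.ofReal r ^ h :=
    Filter.eventually_lt_of_lt_liminf hblt
  obtain ⟨ε₁, hε₁, hsub1⟩ := Metric.mem_nhdsWithin_iff.1 hevlow
  set rtil : ℝ := ε₁ / 2 with hrtildef
  have hrtil : 0 < rtil := by positivity
  have hball_low : ∀ r : ℝ, 0 < r → r ≤ rtil →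
      b * ENNReal.ofReal r ^ h ≤ φ (closedBall x r) := by
    intro r hr hrle
    have hmem : r ∈ Metric.ball (0 : ℝ) ε₁ ∩ Set.Ioi 0 := by
      constructor
      · rw [Metric.mem_ball, Real.dist_eq, sub_zero, abs_of_pos hr]
        calc r ≤ rtil := hrle
          _ < ε₁ := by rw [hrtildef]; linarith
      · exact hr
    have hlt : b < φ (closedBall x r) / ENNReal.ofReal r ^ h := hsub1 hmem
    have hd0 : (ENNReal.ofReal r ^ h) ≠ 0 := pow_ne_zero _ (ENNReal.ofReal_pos.2 hr).ne'
    have hdt : (ENNReal.ofReal r ^ h) ≠ ⊤ := ENNReal.pow_ne_top ENNReal.ofReal_ne_top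
    exact ((ENNReal.lt_div_iff_mul_lt (Or.inl hd0) (Or.inl hdt)).1 hlt).le
  -- blow-up measure bounds on balls
  have hblowball : ∀ R : ℝ, 0 < R → ∀ r : ℝ, 0 < r → r * R ≤ rbar →
      blow φ x r h (closedBall 1 R) ≤ (upDen h φ x + 1) * ENNReal.ofReal R ^ h := by
    intro R hR r hr hrR
    rw [blow_apply_closedBall φ x hr h R]
    have h1 := hball _ (mul_pos hr hR) hrR
    rw [ENNReal.ofReal_mul hr.le, mul_pow] at h1
    have hd0 : (ENNReal.ofReal r ^ h) ≠ 0 := pow_ne_zero _ (ENNReal.ofReal_pos.2 hr).ne'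
    have hdt : (ENNReal.ofReal r ^ h) ≠ ⊤ := ENNReal.pow_ne_top ENNReal.ofReal_ne_top
    calc (ENNReal.ofReal r ^ h)⁻¹ * φ (closedBall x (r * R))
        ≤ (ENNReal.ofReal r ^ h)⁻¹ *
          ((upDen h φ x + 1) * (ENNReal.ofReal r ^ h * ENNReal.ofReal R ^ h)) :=
          mul_le_mul_right h1 _
      _ = (upDen h φ x + 1) * ENNReal.ofReal R ^ h := by
          rw [show (upDen h φ x + 1) * (ENNReal.ofReal r ^ h * ENNReal.ofReal R ^ h)
              = ENNReal.ofReal r ^ h * ((upDen h φ x + 1) * ENNReal.ofReal R ^ h) by ring,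
            ← mul_assoc, ENNReal.inv_mul_cancel hd0 hdt, one_mul]
  have hblowlow : ∀ R : ℝ, 0 < R → ∀ r : ℝ, 0 < r → r * R ≤ rtil →
      b * ENNReal.ofReal R ^ h ≤ blow φ x r h (closedBall 1 R) := by
    intro R hR r hr hrR
    rw [blow_apply_closedBall φ x hr h R]
    have h1 := hball_low _ (mul_pos hr hR) hrR
    rw [ENNReal.ofReal_mul hr.le, mul_pow] at h1
    have hd0 : (ENNReal.ofReal r ^ h) ≠ 0 := pow_ne_zero _ (ENNReal.ofReal_pos.2 hr).ne'
    have hdt : (ENNReal.ofReal r ^ h) ≠ ⊤ := ENNReal.pow_ne_top ENNReal.ofReal_ne_top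
    calc b * ENNReal.ofReal R ^ h
        = (ENNReal.ofReal r ^ h)⁻¹ * (ENNReal.ofReal r ^ h * (b * ENNReal.ofReal R ^ h)) := by
          rw [← mul_assoc, ENNReal.inv_mul_cancel hd0 hdt, one_mul]
      _ ≤ (ENNReal.ofReal r ^ h)⁻¹ * φ (closedBall x (r * R)) := by
          refine mul_le_mul_right ?_ _
          calc ENNReal.ofReal r ^ h * (b * ENNReal.ofReal R ^ h)
              = b * (ENNReal.ofReal r ^ h * ENNReal.ofReal R ^ h) := by ring
            _ ≤ _ := h1
  -- every tangent measure is finite on compacts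
  have htanfin : ∀ ν₀ ∈ Tan h φ x, IsFiniteMeasureOnCompacts ν₀ := by
    rintro ν₀ ⟨rs, hrs_pos, hrs0, hws⟩
    constructor
    intro K hK
    obtain ⟨RK, hRK⟩ := (Metric.isBounded_iff_subset_closedBall (1 : G)).1 hK.isBounded
    set R : ℝ := max RK 1 with hRdef
    have hR : 0 < R := lt_of_lt_of_le one_pos (le_max_right _ _)
    set g : G → ℝ := cutf (R + 2) with hgdef
    have hgc : Continuous g := cutf_continuous _
    have hgs : HasCompactSupport g := cutf_hcs _ (isCompact_closedBall _ _)
    have hint_ge : ∀ᶠ k in atTop, (b * ENNReal.ofReal (R + 1) ^ h).toReal ≤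
        ∫ p, g p ∂(blow φ x (rs k) h) := by
      have hev1 : ∀ᶠ k in atTop, rs k < rtil / (R + 1) :=
        hrs0.eventually_lt_const (by positivity)
      filter_upwards [hev1, hrs0.eventually_lt_const hrtil,
        Filter.Eventually.of_forall hrs_pos] with k hk _ hkpos
      haveI := blow_fmoc φ x (hrs_pos k) h
      have hint : Integrable g (blow φ x (rs k) h) :=
        hgc.integrable_of_hasCompactSupport hgs
      have hblow_ne : blow φ x (rs k) h (closedBall 1 (R + 1)) ≠ ⊤ :=
        ((isCompact_closedBall _ _).measure_lt_top).ne
      have hmono : ∫ p in closedBall 1 (R + 1), g p ∂(blow φ x (rs k) h) ≤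
          ∫ p, g p ∂(blow φ x (rs k) h) :=
        MeasureTheory.setIntegral_le_integral hint
          (Filter.Eventually.of_forall (fun p => cutf_nonneg _ p))
      have heq : ∫ p in closedBall 1 (R + 1), g p ∂(blow φ x (rs k) h)
          = ((blow φ x (rs k) h) (closedBall 1 (R + 1))).toReal := by
        rw [MeasureTheory.setIntegral_congr_fun (Metric.isClosed_closedBall.measurableSet)
          (fun p hp => cutf_eq_one (by
            rw [Metric.mem_closedBall] at hp; linarith))]
        rw [MeasureTheory.setIntegral_const, smul_eq_mul, mul_one, MeasureTheory.measureReal_def]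
      have hbl := hblowlow (R + 1) (by linarith) (rs k) (hrs_pos k)
        (by rw [← le_div_iff₀ (by linarith : (0:ℝ) < R + 1)]; exact hk.le)
      calc (b * ENNReal.ofReal (R + 1) ^ h).toReal
          ≤ ((blow φ x (rs k) h) (closedBall 1 (R + 1))).toReal :=
            ENNReal.toReal_mono hblow_ne hbl
        _ = ∫ p in closedBall 1 (R + 1), g p ∂(blow φ x (rs k) h) := heq.symm
        _ ≤ _ := hmono
    have hgl := hws g hgc hgs
    have hposb : 0 < (b * ENNReal.ofReal (R + 1) ^ h).toReal :=
      ENNReal.toReal_pos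
        (mul_ne_zero hb0 (pow_ne_zero _ (ENNReal.ofReal_pos.2 (by linarith)).ne'))
        (ENNReal.mul_ne_top hbt (ENNReal.pow_ne_top ENNReal.ofReal_ne_top))
    have hlimge : (b * ENNReal.ofReal (R + 1) ^ h).toReal ≤ ∫ p, g p ∂ν₀ :=
      ge_of_tendsto hgl hint_ge
    have hgint : Integrable g ν₀ := by
      by_contra hni
      rw [MeasureTheory.integral_undef hni] at hlimge
      linarith
    have h1 : ν₀ K ≤ ν₀ {p | 1 ≤ g p} := by
      apply measure_mono
      intro p hp
      have hd : dist p 1 ≤ R := le_trans (hRK hp) (le_max_left _ _)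
      have : g p = 1 := cutf_eq_one (by linarith)
      simp only [Set.mem_setOf_eq, this, le_refl]
    exact lt_of_le_of_lt h1 (hgint.measure_ge_lt_top one_pos)
  have htani : ∀ ν₀ ∈ Tan h φ x, ∀ g : G → ℝ, Continuous g → HasCompactSupport g →
      Integrable g ν₀ := by
    intro ν₀ hν₀ g hg hgs
    haveI := htanfin ν₀ hν₀
    exact hg.integrable_of_hasCompactSupport hgs
  -- countable dense family of test functions
  obtain ⟨T, hTcount, hTdense⟩ := TopologicalSpace.exists_countable_dense C(G, ℝ)
  set Fam : Set ((G → ℝ) × ℕ) :=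
    (fun gn : C(G, ℝ) × ℕ => ((fun p => cutf ((gn.2 : ℝ) + 1) p * gn.1 p), gn.2)) ''
      (T ×ˢ (Set.univ : Set ℕ)) with hFamdef
  have hFamc : Fam.Countable := (hTcount.prod Set.countable_univ).image _
  have hFamne : Fam.Nonempty := by
    obtain ⟨g0, hg0⟩ := hTdense.nonempty
    exact ⟨_, Set.mem_image_of_mem _ (Set.mk_mem_prod hg0 (Set.mem_univ 0))⟩
  obtain ⟨e, he⟩ := hFamc.exists_eq_range hFamne
  set fj : ℕ → G → ℝ := fun j => (e j).1 with hfjdef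
  set nj : ℕ → ℕ := fun j => (e j).2 with hnjdef
  have hjmem : ∀ j, ∃ g : C(G, ℝ), g ∈ T ∧
      fj j = fun p => cutf ((nj j : ℝ) + 1) p * g p := by
    intro j
    have hj : e j ∈ Fam := by rw [he]; exact Set.mem_range_self j
    obtain ⟨gn, hgn, hgneq⟩ := hj
    refine ⟨gn.1, hgn.1, ?_⟩
    have h2 : nj j = gn.2 := by
      show (e j).2 = gn.2
      rw [← hgneq]
    show (e j).1 = _
    rw [← hgneq, h2]
  have hjcont : ∀ j, Continuous (fj j) := by
    intro j
    obtain ⟨g, _, hfj⟩ := hjmem j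
    rw [hfj]
    exact (cutf_continuous _).mul g.continuous
  have hjsupp : ∀ j, tsupport (fj j) ⊆ closedBall 1 ((nj j : ℝ) + 1) := by
    intro j
    obtain ⟨g, _, hfj⟩ := hjmem j
    rw [hfj]
    refine (closure_mono (Function.support_mul_subset_left _ _)).trans ?_
    exact cutf_tsupport _
  have hjhcs : ∀ j, HasCompactSupport (fj j) := fun j =>
    IsCompact.of_isClosed_subset (isCompact_closedBall _ _) (isClosed_tsupport _) (hjsupp j)
  -- approximation property
  have happrox : ∀ (f : G → ℝ), Continuous f → ∀ n : ℕ,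
      tsupport f ⊆ closedBall 1 (n : ℝ) → ∀ δ : ℝ, 0 < δ →
      ∃ j : ℕ, nj j = n ∧ ∀ p, |f p - fj j p| ≤ δ := by
    intro f hfc n hsupp δ hδ
    set f₀ : C(G, ℝ) := ⟨f, hfc⟩ with hf₀def
    have hV : {q : ℝ × ℝ | dist q.1 q.2 < δ} ∈ 𝓤 ℝ := Metric.dist_mem_uniformity hδ
    have hE : {fg : C(G, ℝ) × C(G, ℝ) | ∀ p ∈ closedBall (1 : G) ((n : ℝ) + 1),
        (fg.1 p, fg.2 p) ∈ {q : ℝ × ℝ | dist q.1 q.2 < δ}} ∈ 𝓤 C(G, ℝ) :=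
      ContinuousMap.hasBasis_compactConvergenceUniformity.mem_of_mem
        (i := (closedBall (1 : G) ((n : ℝ) + 1), {q : ℝ × ℝ | dist q.1 q.2 < δ}))
        ⟨isCompact_closedBall _ _, hV⟩
    have hball2 := UniformSpace.ball_mem_nhds f₀ hE
    obtain ⟨g, hgball, hgT⟩ := mem_closure_iff_nhds.1 (hTdense f₀) _ hball2
    have hmemFam : ((fun p => cutf ((n : ℝ) + 1) p * g p), n) ∈ Fam :=
      Set.mem_image_of_mem _ (Set.mk_mem_prod hgT (Set.mem_univ n))
    rw [he] at hmemFam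
    obtain ⟨j, hj⟩ := hmemFam
    have hjn : nj j = n := by show (e j).2 = n; rw [hj]
    refine ⟨j, hjn, ?_⟩
    intro p
    have hfjp : fj j p = cutf ((n : ℝ) + 1) p * g p := by
      show (e j).1 p = _; rw [hj]
    have hgb : ∀ q ∈ closedBall (1 : G) ((n : ℝ) + 1), |f q - g q| < δ := by
      intro q hq
      have := hgball q hq
      simpa [Real.dist_eq, hf₀def] using this
    rw [hfjp]
    rcases le_or_gt (dist p 1) (n : ℝ) with hd | hd
    · have hχ : cutf ((n : ℝ) + 1) p = 1 := cutf_eq_one (by linarith)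
      rw [hχ, one_mul]
      exact (hgb p (by rw [mem_closedBall]; linarith)).le
    rcases le_or_gt (dist p 1) ((n : ℝ) + 1) with hd2 | hd2
    · have hf0 : f p = 0 := image_eq_zero_of_notMem_tsupport
        (fun hc => absurd (hsupp hc) (by rw [mem_closedBall]; push_neg; exact hd))
      have hgp : |g p| < δ := by
        have := hgb p (by rw [mem_closedBall]; linarith)
        rwa [hf0, zero_sub, abs_neg] at this
      rw [hf0, zero_sub, abs_neg]
      calc |cutf ((n : ℝ) + 1) p * g p| = cutf ((n : ℝ) + 1) p * |g p| := by
            rw [abs_mul, abs_of_nonneg (cutf_nonneg _ p)]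
        _ ≤ 1 * |g p| := mul_le_mul_of_nonneg_right (cutf_le_one _ p) (abs_nonneg _)
        _ = |g p| := one_mul _
        _ ≤ δ := hgp.le
    · have hχ : cutf ((n : ℝ) + 1) p = 0 := cutf_eq_zero (by linarith)
      have hf0 : f p = 0 := image_eq_zero_of_notMem_tsupport
        (fun hc => absurd (hsupp hc) (by rw [mem_closedBall]; push_neg; linarith))
      rw [hχ, zero_mul, hf0, sub_zero, abs_zero]
      exact hδ.le
  -- uniform bounds and the subsequence
  choose Mj hMj0 hMj using fun j => exists_abs_bound (hjcont j) (hjhcs j)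
  set Cen : ℝ → ℝ≥0∞ := fun R => (upDen h φ x + 1) * ENNReal.ofReal R ^ h with hCendef
  have hCentop : ∀ R, Cen R ≠ ⊤ := fun R =>
    ENNReal.mul_ne_top (ENNReal.add_ne_top.2 ⟨hup.ne, ENNReal.one_ne_top⟩)
      (ENNReal.pow_ne_top ENNReal.ofReal_ne_top)
  set CR : ℝ → ℝ := fun R => (Cen R).toReal with hCRdef
  have hCR0 : ∀ R, 0 ≤ CR R := fun R => ENNReal.toReal_nonneg
  have hblowint : ∀ (g : G → ℝ), Continuous g → ∀ R : ℝ, 0 < R →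
      tsupport g ⊆ closedBall 1 R → ∀ M : ℝ, (∀ p, |g p| ≤ M) →
      ∀ r : ℝ, 0 < r → r * R ≤ rbar →
      |∫ p, g p ∂(blow φ x r h)| ≤ M * CR R := by
    intro g hg R hR hgsupp M hM r hr hrR
    haveI := blow_fmoc φ x hr h
    have hfin : blow φ x r h (closedBall 1 R) ≠ ⊤ :=
      ((isCompact_closedBall _ _).measure_lt_top).ne
    have hb1 := abs_integral_le_of_support_subset (μ := blow φ x r h) hg
      Metric.isClosed_closedBall.measurableSet hgsupp hfin hM
    refine hb1.trans ?_
    have hM0 : 0 ≤ M := le_trans (abs_nonneg _) (hM 1)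
    exact mul_le_mul_of_nonneg_left
      (ENNReal.toReal_mono (hCentop R) (hblowball R hR r hr hrR)) hM0
  have htanbnd : ∀ ν₀ ∈ Tan h φ x, ∀ (g : G → ℝ), Continuous g → ∀ R : ℝ, 0 < R →
      tsupport g ⊆ closedBall 1 R → ∀ M : ℝ, (∀ p, |g p| ≤ M) →
      |∫ p, g p ∂ν₀| ≤ M * CR R := by
    rintro ν₀ ⟨rs, hrs_pos, hrs0, hws⟩ g hg R hR hgsupp M hM
    have hgs : HasCompactSupport g := IsCompact.of_isClosed_subset (isCompact_closedBall _ _)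
      (isClosed_tsupport _) hgsupp
    refine le_of_tendsto (hws g hg hgs).abs ?_
    have hev : ∀ᶠ k in atTop, rs k < rbar / R := hrs0.eventually_lt_const (by positivity)
    filter_upwards [hev] with k hk
    exact hblowint g hg R hR hgsupp M hM (rs k) (hrs_pos k)
      (by rw [← le_div_iff₀ hR]; exact hk.le)
  set a : ℕ → ℕ → ℝ := fun i j => ∫ p, fj j p ∂(ν i) with hadef
  have haB : ∀ i j, a i j ∈ Set.Icc (-(Mj j * CR ((nj j : ℝ) + 1)))
      (Mj j * CR ((nj j : ℝ) + 1)) := by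
    intro i j
    have hbd := htanbnd (ν i) (hν i) (fj j) (hjcont j) ((nj j : ℝ) + 1) (by positivity)
      (hjsupp j) (Mj j) (hMj j)
    rw [abs_le] at hbd
    exact ⟨hbd.1, hbd.2⟩
  have hKcomp : IsCompact (Set.univ.pi fun j : ℕ =>
      Set.Icc (-(Mj j * CR ((nj j : ℝ) + 1))) (Mj j * CR ((nj j : ℝ) + 1))) :=
    isCompact_univ_pi fun j => isCompact_Icc
  obtain ⟨ℓ, hℓmem, σ, hσmono, hσtend⟩ := hKcomp.tendsto_subseq
    (x := fun i => fun j => a i j)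
    (fun i => by rw [Set.mem_univ_pi]; exact fun j => haB i j)
  have hcoord : ∀ j, Tendsto (fun i => a (σ i) j) atTop (𝓝 (ℓ j)) := by
    intro j
    have htt := hσtend
    rw [tendsto_pi_nhds] at htt
    exact htt j
  have hσge : ∀ i, i ≤ σ i := fun i => hσmono.le_apply
  -- select the diagonal radii
  have hρex : ∀ i : ℕ, ∃ ρ : ℝ, 0 < ρ ∧ ρ ≤ rbar / (i + 1) ∧ ρ ≤ 1 / (i + 1) ∧
      ∀ j ≤ i, |∫ p, fj j p ∂(blow φ x ρ h) - a i j| ≤ 1 / (i + 1) := by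
    intro i
    obtain ⟨rs, hrs_pos, hrs0, hws⟩ := hν i
    have h1 : ∀ᶠ k in atTop, rs k ≤ rbar / (i + 1) :=
      (hrs0.eventually_lt_const (by positivity)).mono fun k hk => hk.le
    have h2 : ∀ᶠ k in atTop, rs k ≤ 1 / (i + 1) :=
      (hrs0.eventually_lt_const (by positivity)).mono fun k hk => hk.le
    have h3 : ∀ᶠ k in atTop, ∀ j ∈ Set.Iic i,
        |∫ p, fj j p ∂(blow φ x (rs k) h) - a i j| ≤ 1 / (i + 1) := by
      rw [Filter.eventually_all_finite (Set.finite_Iic i)]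
      intro j _
      have hws' : Tendsto (fun k => ∫ p, fj j p ∂(blow φ x (rs k) h)) atTop (𝓝 (a i j)) :=
        hws (fj j) (hjcont j) (hjhcs j)
      have htt := (hws'.sub_const (a i j)).abs
      simp only [sub_self, abs_zero] at htt
      exact (htt.eventually_lt_const (by positivity : (0:ℝ) < 1 / (i+1))).mono
        fun k hk => hk.le
    obtain ⟨k, hk1, hk2, hk3⟩ := (h1.and (h2.and h3)).exists
    exact ⟨rs k, hrs_pos k, hk1, hk2, fun j hj => hk3 j hj⟩
  choose ρ hρpos hρrbar hρone hρcl using hρex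
  set m : ℕ → Measure G := fun i => blow φ x (ρ (σ i)) h with hmdef
  have hmfmoc : ∀ i, IsFiniteMeasureOnCompacts (m i) := fun i => blow_fmoc φ x (hρpos (σ i)) h
  -- convergence of the countable family against `m`
  have htend0 : Tendsto (fun i : ℕ => 1 / ((σ i : ℝ) + 1)) atTop (𝓝 (0 : ℝ)) := by
    have hbt : Tendsto (fun i : ℕ => 1 / ((i : ℝ) + 1)) atTop (𝓝 (0 : ℝ)) :=
      tendsto_one_div_add_atTop_nhds_zero_nat
    refine squeeze_zero (fun i => by positivity) (fun i => ?_) hbt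
    have hle : (i : ℝ) ≤ (σ i : ℝ) := by exact_mod_cast hσge i
    have h1 : (0 : ℝ) < (i : ℝ) + 1 := by positivity
    exact div_le_div_of_nonneg_left one_pos.le h1 (by linarith)
  have hmj : ∀ j, Tendsto (fun i => ∫ p, fj j p ∂(m i)) atTop (𝓝 (ℓ j)) := by
    intro j
    apply Filter.Tendsto.congr_dist (f₁ := fun i => a (σ i) j) (hcoord j)
    apply squeeze_zero' (Filter.Eventually.of_forall fun i => dist_nonneg)
      (g := fun i => 1 / ((σ i : ℝ) + 1)) ?_ htend0
    filter_upwards [Filter.eventually_ge_atTop j] with i hi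
    rw [Real.dist_eq, abs_sub_comm]
    exact hρcl (σ i) j (le_trans hi (hσge i))
  -- the limit functional on all of C_c
  have key : ∀ (f : G → ℝ), Continuous f → HasCompactSupport f →
      ∃ L : ℝ, Tendsto (fun i => ∫ p, f p ∂(m i)) atTop (𝓝 L) ∧
        Tendsto (fun i => ∫ p, f p ∂(ν (σ i))) atTop (𝓝 L) := by
    intro f hf hfs
    obtain ⟨n, hn0, hnsupp⟩ := exists_nat_tsupport_subset hfs
    set R : ℝ := (n : ℝ) + 1 with hRdef
    have hR : 0 < R := by positivity
    have hRn : tsupport f ⊆ closedBall 1 R :=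
      hnsupp.trans (closedBall_subset_closedBall (by rw [hRdef]; linarith))
    have hdsupp : ∀ j, nj j = n → tsupport (fun p => f p - fj j p) ⊆ closedBall 1 R := by
      intro j hjn
      refine (tsupport_sub_subset f (fj j)).trans (Set.union_subset hRn ?_)
      refine (hjsupp j).trans (closedBall_subset_closedBall ?_)
      rw [hjn, hRdef]
    have hcond : ∀ᶠ i in atTop, ρ (σ i) * R ≤ rbar := by
      filter_upwards [Filter.eventually_ge_atTop n] with i hi
      have hle1 : ρ (σ i) ≤ rbar / ((σ i : ℝ) + 1) := hρrbar (σ i)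
      have h2 : R ≤ (σ i : ℝ) + 1 := by
        rw [hRdef]
        have : (n : ℝ) ≤ (σ i : ℝ) := by exact_mod_cast le_trans hi (hσge i)
        linarith
      have hspos : (0 : ℝ) < (σ i : ℝ) + 1 := by positivity
      calc ρ (σ i) * R ≤ (rbar / ((σ i : ℝ) + 1)) * R :=
            mul_le_mul_of_nonneg_right hle1 hR.le
        _ ≤ rbar := by
            rw [div_mul_eq_mul_div, div_le_iff₀ hspos]
            exact mul_le_mul_of_nonneg_left h2 hrbar.le
    have hdm : ∀ j, nj j = n → ∀ δ : ℝ, (∀ p, |f p - fj j p| ≤ δ) →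
        ∀ᶠ i in atTop, |∫ p, (f p - fj j p) ∂(m i)| ≤ δ * CR R := by
      intro j hjn δ hδcl
      filter_upwards [hcond] with i hi
      exact hblowint _ (hf.sub (hjcont j)) R hR (hdsupp j hjn) δ hδcl (ρ (σ i)) (hρpos _) hi
    have hsplitm : ∀ j i, ∫ p, (f p - fj j p) ∂(m i) =
        ∫ p, f p ∂(m i) - ∫ p, fj j p ∂(m i) := by
      intro j i
      haveI := hmfmoc i
      exact MeasureTheory.integral_sub (hf.integrable_of_hasCompactSupport hfs)
        ((hjcont j).integrable_of_hasCompactSupport (hjhcs j))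
    have hcauchy : CauchySeq (fun i => ∫ p, f p ∂(m i)) := by
      rw [Metric.cauchySeq_iff]
      intro ε hε
      set δ : ℝ := ε / (4 * (CR R + 1)) with hδdef
      have hCRpos : (0 : ℝ) < CR R + 1 := by have := hCR0 R; linarith
      have hδ : 0 < δ := by rw [hδdef]; positivity
      have hδCR : δ * CR R ≤ ε / 4 := by
        rw [hδdef, div_mul_eq_mul_div, div_le_div_iff₀ (by positivity) (by norm_num)]
        have := hCR0 R
        nlinarith
      obtain ⟨j, hjn, hjcl⟩ := happrox f hf n hnsupp δ hδ
      obtain ⟨N₂, hN₂⟩ := Filter.eventually_atTop.1 (hdm j hjn δ hjcl)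
      obtain ⟨N₁, hN₁⟩ := Metric.cauchySeq_iff.1 (hmj j).cauchySeq (ε / 4) (by positivity)
      refine ⟨max N₁ N₂, fun i hi k hk => ?_⟩
      have hb1 := hN₂ i (le_trans (le_max_right _ _) hi)
      have hb2 := hN₂ k (le_trans (le_max_right _ _) hk)
      have hb3 := hN₁ i (le_trans (le_max_left _ _) hi) k (le_trans (le_max_left _ _) hk)
      rw [Real.dist_eq] at hb3 ⊢
      have hdecomp : ∫ p, f p ∂(m i) - ∫ p, f p ∂(m k) =
          (∫ p, (f p - fj j p) ∂(m i)) - (∫ p, (f p - fj j p) ∂(m k)) +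
            (∫ p, fj j p ∂(m i) - ∫ p, fj j p ∂(m k)) := by
        rw [hsplitm j i, hsplitm j k]; ring
      rw [hdecomp]
      have t1 := abs_add_le ((∫ p, (f p - fj j p) ∂(m i)) - (∫ p, (f p - fj j p) ∂(m k)))
        (∫ p, fj j p ∂(m i) - ∫ p, fj j p ∂(m k))
      have t2 := abs_sub (∫ p, (f p - fj j p) ∂(m i)) (∫ p, (f p - fj j p) ∂(m k))
      linarith
    obtain ⟨L, hL⟩ := cauchySeq_tendsto_of_complete hcauchy
    refine ⟨L, hL, ?_⟩
    rw [Metric.tendsto_atTop]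
    intro ε hε
    set δ : ℝ := ε / (4 * (CR R + 1)) with hδdef
    have hCRpos : (0 : ℝ) < CR R + 1 := by have := hCR0 R; linarith
    have hδ : 0 < δ := by rw [hδdef]; positivity
    have hδCR : δ * CR R ≤ ε / 4 := by
      rw [hδdef, div_mul_eq_mul_div, div_le_div_iff₀ (by positivity) (by norm_num)]
      have := hCR0 R
      nlinarith
    obtain ⟨j, hjn, hjcl⟩ := happrox f hf n hnsupp δ hδ
    have htb : ∀ i, |∫ p, (f p - fj j p) ∂(ν (σ i))| ≤ δ * CR R := fun i =>
      htanbnd (ν (σ i)) (hν (σ i)) _ (hf.sub (hjcont j)) R hR (hdsupp j hjn) δ hjcl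
    have hsplitν : ∀ i, ∫ p, (f p - fj j p) ∂(ν (σ i)) =
        ∫ p, f p ∂(ν (σ i)) - ∫ p, fj j p ∂(ν (σ i)) := fun i =>
      MeasureTheory.integral_sub (htani _ (hν _) f hf hfs)
        (htani _ (hν _) (fj j) (hjcont j) (hjhcs j))
    have hLl : |L - ℓ j| ≤ δ * CR R := by
      have hsub2 : Tendsto (fun i => ∫ p, f p ∂(m i) - ∫ p, fj j p ∂(m i)) atTop
          (𝓝 (L - ℓ j)) := hL.sub (hmj j)
      refine le_of_tendsto hsub2.abs ?_
      filter_upwards [hdm j hjn δ hjcl] with i hi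
      rw [← hsplitm j i]
      exact hi
    obtain ⟨N₁, hN₁⟩ := Metric.tendsto_atTop.1 (hcoord j) (ε / 4) (by positivity)
    refine ⟨N₁, fun i hi => ?_⟩
    have hb3 := hN₁ i hi
    rw [Real.dist_eq] at hb3 ⊢
    have t1 := htb i
    rw [hsplitν i] at t1
    have haj : a (σ i) j = ∫ p, fj j p ∂(ν (σ i)) := rfl
    have hdecomp : ∫ p, f p ∂(ν (σ i)) - L =
        (∫ p, f p ∂(ν (σ i)) - ∫ p, fj j p ∂(ν (σ i))) +
          ((a (σ i) j - ℓ j) + (ℓ j - L)) := by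
      rw [haj]; ring
    rw [hdecomp]
    have u1 := abs_add_le (∫ p, f p ∂(ν (σ i)) - ∫ p, fj j p ∂(ν (σ i)))
      ((a (σ i) j - ℓ j) + (ℓ j - L))
    have u2 := abs_add_le (a (σ i) j - ℓ j) (ℓ j - L)
    have u3 : |ℓ j - L| = |L - ℓ j| := abs_sub_comm _ _
    linarith
  choose Lam hLam using key
  set Λtot : (G → ℝ) → ℝ := fun f =>
    if hc : Continuous f ∧ HasCompactSupport f then Lam f hc.1 hc.2 else 0 with hΛdef
  have hΛm : ∀ (f : G → ℝ) (hfc : Continuous f) (hfs : HasCompactSupport f),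
      Tendsto (fun i => ∫ p, f p ∂(m i)) atTop (𝓝 (Λtot f)) := by
    intro f hfc hfs
    have hfeq : Λtot f = Lam f hfc hfs := by
      rw [hΛdef]; dsimp only; rw [dif_pos ⟨hfc, hfs⟩]
    rw [hfeq]
    exact (hLam f hfc hfs).1
  have hΛν : ∀ (f : G → ℝ) (hfc : Continuous f) (hfs : HasCompactSupport f),
      Tendsto (fun i => ∫ p, f p ∂(ν (σ i))) atTop (𝓝 (Λtot f)) := by
    intro f hfc hfs
    have hfeq : Λtot f = Lam f hfc hfs := by
      rw [hΛdef]; dsimp only; rw [dif_pos ⟨hfc, hfs⟩]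
    rw [hfeq]
    exact (hLam f hfc hfs).2
  -- algebraic properties of the limit functional
  have hΛnonneg : ∀ f : G → ℝ, Continuous f → HasCompactSupport f → (∀ p, 0 ≤ f p) →
      0 ≤ Λtot f := by
    intro f hfc hfs hp
    exact ge_of_tendsto (hΛm f hfc hfs)
      (Filter.Eventually.of_forall fun i => MeasureTheory.integral_nonneg hp)
  have hΛadd : ∀ f g : G → ℝ, Continuous f → HasCompactSupport f → Continuous g →
      HasCompactSupport g → Λtot (fun p => f p + g p) = Λtot f + Λtot g := by
    intro f g hfc hfs hgc hgs
    refine tendsto_nhds_unique (hΛm _ (hfc.add hgc) (hfs.add hgs)) ?_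
    have h2 := (hΛm f hfc hfs).add (hΛm g hgc hgs)
    refine h2.congr fun i => ?_
    haveI := hmfmoc i
    exact (MeasureTheory.integral_add (hfc.integrable_of_hasCompactSupport hfs)
      (hgc.integrable_of_hasCompactSupport hgs)).symm
  have hΛsmul : ∀ (c : ℝ) (f : G → ℝ), Continuous f → HasCompactSupport f →
      Λtot (fun p => c * f p) = c * Λtot f := by
    intro c f hfc hfs
    have hcs2 : HasCompactSupport (fun p => c * f p) :=
      hfs.mono' ((Function.support_mul_subset_right _ _).trans (subset_tsupport _))
    refine tendsto_nhds_unique (hΛm _ (continuous_const.mul hfc) hcs2) ?_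
    have h2 := (hΛm f hfc hfs).const_mul c
    refine h2.congr fun i => ?_
    exact (MeasureTheory.integral_const_mul c _).symm
  have hΛmono : ∀ f g : G → ℝ, Continuous f → HasCompactSupport f → Continuous g →
      HasCompactSupport g → (∀ p, f p ≤ g p) → Λtot f ≤ Λtot g := by
    intro f g hfc hfs hgc hgs hle
    refine le_of_tendsto_of_tendsto' (hΛm f hfc hfs) (hΛm g hgc hgs) fun i => ?_
    haveI := hmfmoc i
    exact MeasureTheory.integral_mono (hfc.integrable_of_hasCompactSupport hfs)
      (hgc.integrable_of_hasCompactSupport hgs) hle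
  have hΛzero : Λtot (fun _ => (0 : ℝ)) = 0 := by
    have hz : HasCompactSupport (fun _ : G => (0 : ℝ)) :=
      hf0s.mono' (by simp)
    refine tendsto_nhds_unique (hΛm _ continuous_const hz) ?_
    have : (fun i => ∫ _, (0 : ℝ) ∂(m i)) = fun _ => (0 : ℝ) := by
      funext i; simp
    rw [this]
    exact tendsto_const_nhds
  -- admissible functions and the content
  set Adm : Set G → Set ℝ := fun K => {t : ℝ | ∃ g : G → ℝ, Continuous g ∧
      HasCompactSupport g ∧ (∀ p, 0 ≤ g p) ∧ (∀ p ∈ K, 1 ≤ g p) ∧ t = Λtot g} with hAdmdef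
  have hAdmBdd : ∀ K, BddBelow (Adm K) := by
    intro K
    refine ⟨0, fun t ht => ?_⟩
    obtain ⟨g, hgc, hgs, hg0, _, rfl⟩ := ht
    exact hΛnonneg g hgc hgs hg0
  have hAdmNe : ∀ K : Set G, IsCompact K → (Adm K).Nonempty := by
    intro K hK
    obtain ⟨RK, hRK⟩ := (Metric.isBounded_iff_subset_closedBall (1 : G)).1 hK.isBounded
    refine ⟨Λtot (cutf (RK + 2)), cutf (RK + 2), cutf_continuous _,
      cutf_hcs _ (isCompact_closedBall _ _), fun p => cutf_nonneg _ p, ?_, rfl⟩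
    intro p hp
    have hd := hRK hp
    rw [mem_closedBall] at hd
    rw [cutf_eq_one (by linarith)]
  set lam : Set G → ℝ := fun K => sInf (Adm K) with hlamdef
  have hlam_nonneg : ∀ K : Set G, IsCompact K → 0 ≤ lam K := by
    intro K hK
    refine le_csInf (hAdmNe K hK) fun t ht => ?_
    obtain ⟨g, hgc, hgs, hg0, _, rfl⟩ := ht
    exact hΛnonneg g hgc hgs hg0
  have hlam_le : ∀ (K : Set G) (g : G → ℝ), Continuous g → HasCompactSupport g →
      (∀ p, 0 ≤ g p) → (∀ p ∈ K, 1 ≤ g p) → lam K ≤ Λtot g := by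
    intro K g hgc hgs h0 h1'
    exact csInf_le (hAdmBdd K) ⟨g, hgc, hgs, h0, h1', rfl⟩
  have hlam_mono : ∀ K1 K2 : Set G, IsCompact K2 → K1 ⊆ K2 → lam K1 ≤ lam K2 := by
    intro K1 K2 hK2 hsub12
    apply csInf_le_csInf (hAdmBdd K1) (hAdmNe K2 hK2)
    rintro t ⟨g, hgc, hgs, h0, h1', rfl⟩
    exact ⟨g, hgc, hgs, h0, fun p hp => h1' p (hsub12 hp), rfl⟩
  have hsup_le : ∀ K1 K2 : Set G, IsCompact K1 → IsCompact K2 →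
      lam (K1 ∪ K2) ≤ lam K1 + lam K2 := by
    intro K1 K2 hK1 hK2
    refine le_of_forall_pos_le_add fun ε hε => ?_
    obtain ⟨t1, ht1, ht1lt⟩ := (csInf_lt_iff (hAdmBdd K1) (hAdmNe K1 hK1)).1
      (lt_add_of_pos_right (lam K1) (half_pos hε))
    obtain ⟨t2, ht2, ht2lt⟩ := (csInf_lt_iff (hAdmBdd K2) (hAdmNe K2 hK2)).1
      (lt_add_of_pos_right (lam K2) (half_pos hε))
    obtain ⟨g1, hg1c, hg1s, hg10, hg11, rfl⟩ := ht1
    obtain ⟨g2, hg2c, hg2s, hg20, hg21, rfl⟩ := ht2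
    have hcand : lam (K1 ∪ K2) ≤ Λtot (fun p => g1 p + g2 p) := by
      apply hlam_le _ _ (hg1c.add hg2c) (hg1s.add hg2s)
        (fun p => add_nonneg (hg10 p) (hg20 p))
      rintro p (hp | hp)
      · calc (1 : ℝ) ≤ g1 p := hg11 p hp
          _ ≤ g1 p + g2 p := le_add_of_nonneg_right (hg20 p)
      · calc (1 : ℝ) ≤ g2 p := hg21 p hp
          _ ≤ g1 p + g2 p := le_add_of_nonneg_left (hg10 p)
    rw [hΛadd g1 g2 hg1c hg1s hg2c hg2s] at hcand
    linarith
  have hlam_empty : lam (∅ : Set G) = 0 := by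
    refine le_antisymm ?_ (hlam_nonneg _ isCompact_empty)
    have := hlam_le (∅ : Set G) (fun _ => (0 : ℝ)) continuous_const
      (hf0s.mono' (by simp)) (fun p => le_refl 0) (fun p hp => absurd hp (Set.notMem_empty p))
    rwa [hΛzero] at this
  have hsup_dis : ∀ K1 K2 : Set G, IsCompact K1 → IsCompact K2 → Disjoint K1 K2 →
      lam K1 + lam K2 ≤ lam (K1 ∪ K2) := by
    intro K1 K2 hK1 hK2 hdis
    rcases Set.eq_empty_or_nonempty K1 with h1e | h1ne
    · rw [h1e, hlam_empty, Set.empty_union, zero_add]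
    rcases Set.eq_empty_or_nonempty K2 with h2e | h2ne
    · rw [h2e, hlam_empty, Set.union_empty, add_zero]
    obtain ⟨δs, hδs, hthick⟩ := hdis.exists_thickenings hK1 hK2.isClosed
    set χs : G → ℝ := fun p => max 0 (1 - Metric.infDist p K1 / δs) with hχsdef
    have hχscont : Continuous χs := continuous_const.max (continuous_const.sub
      ((Metric.continuous_infDist_pt K1).div_const δs))
    have hχs0 : ∀ p, 0 ≤ χs p := fun p => le_max_left _ _
    have hχs1 : ∀ p, χs p ≤ 1 := by
      intro p
      have hd : 0 ≤ Metric.infDist p K1 / δs :=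
        div_nonneg Metric.infDist_nonneg hδs.le
      exact max_le zero_le_one (by linarith)
    have hχsK1 : ∀ p ∈ K1, χs p = 1 := by
      intro p hp
      show max 0 (1 - Metric.infDist p K1 / δs) = 1
      rw [Metric.infDist_zero_of_mem hp]
      norm_num
    have hχsK2 : ∀ p ∈ K2, χs p = 0 := by
      intro p hp
      have hfar : δs ≤ Metric.infDist p K1 := by
        by_contra hcon
        push_neg at hcon
        have hmem : p ∈ Metric.thickening δs K1 :=
          (Metric.mem_thickening_iff_infDist_lt h1ne).2 hcon
        exact Set.disjoint_left.1 hthick hmem (Metric.self_subset_thickening hδs K2 hp)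
      have hge1 : (1 : ℝ) ≤ Metric.infDist p K1 / δs := (le_div_iff₀ hδs).2 (by linarith)
      show max 0 (1 - Metric.infDist p K1 / δs) = 0
      rw [max_eq_left (by linarith)]
    refine le_csInf (hAdmNe _ (hK1.union hK2)) ?_
    rintro t ⟨g, hgc, hgs, hg0, hg1', rfl⟩
    have hsupp1 : HasCompactSupport (fun p => g p * χs p) :=
      hgs.mono' ((Function.support_mul_subset_left _ _).trans (subset_tsupport _))
    have hsupp2 : HasCompactSupport (fun p => g p * (1 - χs p)) :=
      hgs.mono' ((Function.support_mul_subset_left _ _).trans (subset_tsupport _))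
    have hb1 : lam K1 ≤ Λtot (fun p => g p * χs p) := by
      apply hlam_le _ (fun p => g p * χs p) (hgc.mul hχscont) hsupp1
        (fun p => mul_nonneg (hg0 p) (hχs0 p))
      intro p hp
      rw [hχsK1 p hp, mul_one]
      exact hg1' p (Or.inl hp)
    have hb2 : lam K2 ≤ Λtot (fun p => g p * (1 - χs p)) := by
      apply hlam_le _ (fun p => g p * (1 - χs p)) (hgc.mul (continuous_const.sub hχscont)) hsupp2
        (fun p => mul_nonneg (hg0 p) (by have := hχs1 p; linarith))
      intro p hp
      rw [hχsK2 p hp]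
      simpa using hg1' p (Or.inr hp)
    have hΛg : Λtot (fun p => g p * χs p) + Λtot (fun p => g p * (1 - χs p)) = Λtot g := by
      rw [← hΛadd (fun p => g p * χs p) (fun p => g p * (1 - χs p)) (hgc.mul hχscont) hsupp1 (hgc.mul (continuous_const.sub hχscont)) hsupp2]
      have hsum : (fun p => g p * χs p + g p * (1 - χs p)) = g := by
        funext p; ring
      rw [hsum]
    linarith
  -- the content and its measure
  set μC : MeasureTheory.Content G :=
    { toFun := fun K => Real.toNNReal (lam K)
      mono' := fun K1 K2 hsub12 => Real.toNNReal_mono (hlam_mono _ _ K2.2 hsub12)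
      sup_disjoint' := by
        intro K1 K2 hdis _ _
        have hK1c : IsCompact (K1 : Set G) := K1.2
        have hK2c : IsCompact (K2 : Set G) := K2.2
        have e1 : lam ((K1 ⊔ K2 : TopologicalSpace.Compacts G) : Set G)
            = lam (K1 : Set G) + lam (K2 : Set G) := by
          rw [TopologicalSpace.Compacts.coe_sup]
          exact le_antisymm (hsup_le _ _ hK1c hK2c) (hsup_dis _ _ hK1c hK2c hdis)
        show Real.toNNReal (lam _) = Real.toNNReal (lam _) + Real.toNNReal (lam _)
        rw [e1, Real.toNNReal_add (hlam_nonneg _ hK1c) (hlam_nonneg _ hK2c)]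
      sup_le' := by
        intro K1 K2
        have hK1c : IsCompact (K1 : Set G) := K1.2
        have hK2c : IsCompact (K2 : Set G) := K2.2
        show Real.toNNReal (lam _) ≤ Real.toNNReal (lam _) + Real.toNNReal (lam _)
        rw [← Real.toNNReal_add (hlam_nonneg _ hK1c) (hlam_nonneg _ hK2c)]
        apply Real.toNNReal_mono
        have e1 : lam ((K1 ⊔ K2 : TopologicalSpace.Compacts G) : Set G)
            ≤ lam (K1 : Set G) + lam (K2 : Set G) := by
          rw [TopologicalSpace.Compacts.coe_sup]
          exact hsup_le _ _ hK1c hK2c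
        exact e1 } with hμCdef
  have hμCval : ∀ (K : Set G) (hK : IsCompact K),
      (μC ⟨K, hK⟩ : ℝ≥0∞) = ENNReal.ofReal (lam K) := by
    intro K hK
    rfl
  set ν' : Measure G := μC.measure with hν'def
  haveI hν'reg : ν'.Regular := μC.regular
  have hν'K : ∀ K : Set G, IsCompact K → ν' K ≠ ⊤ := fun K hK => hK.measure_lt_top.ne
  have hP1 : ∀ K K' : Set G, IsCompact K → IsCompact K' → K ⊆ interior K' →
      (ν' K).toReal ≤ lam K' := by
    intro K K' hK hK' hsub'
    have h1 : ν' K = μC.outerMeasure K := μC.measure_apply hK.isClosed.measurableSet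
    have h3 : μC.outerMeasure (interior K') ≤ ENNReal.ofReal (lam K') :=
      le_trans (μC.outerMeasure_interior_compacts ⟨K', hK'⟩) (le_of_eq (hμCval K' hK'))
    have hchain : ν' K ≤ ENNReal.ofReal (lam K') := by
      rw [h1]
      exact (μC.outerMeasure.mono hsub').trans h3
    calc (ν' K).toReal ≤ (ENNReal.ofReal (lam K')).toReal :=
          ENNReal.toReal_mono ENNReal.ofReal_ne_top hchain
      _ = lam K' := ENNReal.toReal_ofReal (hlam_nonneg K' hK')
  have hP2 : ∀ (K U : Set G), IsCompact K → IsOpen U → K ⊆ U → ν' U ≠ ⊤ →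
      lam K ≤ (ν' U).toReal := by
    intro K U hK hU hKU hUfin
    have h4 : ENNReal.ofReal (lam K) ≤ ν' U := by
      have hle : (μC ⟨K, hK⟩ : ℝ≥0∞) ≤ μC.innerContent ⟨U, hU⟩ :=
        μC.le_innerContent ⟨K, hK⟩ ⟨U, hU⟩ hKU
      have h5 : μC.innerContent ⟨U, hU⟩ = μC.outerMeasure U :=
        (μC.outerMeasure_opens ⟨U, hU⟩).symm
      have h6 : ν' U = μC.outerMeasure U := μC.measure_apply hU.measurableSet
      rw [h6, ← h5]
      calc ENNReal.ofReal (lam K) = (μC ⟨K, hK⟩ : ℝ≥0∞) := (hμCval K hK).symm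
        _ ≤ _ := hle
    calc lam K = (ENNReal.ofReal (lam K)).toReal :=
          (ENNReal.toReal_ofReal (hlam_nonneg K hK)).symm
      _ ≤ (ν' U).toReal := ENNReal.toReal_mono hUfin h4
  -- the representation theorem for nonnegative functions
  have hrep0 : ∀ f : G → ℝ, Continuous f → HasCompactSupport f → (∀ p, 0 ≤ f p) →
      ∫ p, f p ∂ν' = Λtot f := by
    intro f hf hfs hf0'
    obtain ⟨n, hn0, hnsupp⟩ := exists_nat_tsupport_subset hfs
    obtain ⟨M, hM0, hM⟩ := exists_abs_bound hf hfs
    set V : ℝ := (ν' (closedBall 1 ((n : ℝ) + 2))).toReal with hVdef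
    have hV0 : 0 ≤ V := ENNReal.toReal_nonneg
    have hworth : ∀ W : Set G, W ⊆ closedBall 1 ((n : ℝ) + 2) → (ν' W).toReal ≤ V := by
      intro W hW
      exact ENNReal.toReal_mono (hν'K _ (isCompact_closedBall _ _)) (measure_mono hW)
    have hkey : ∀ ε : ℝ, 0 < ε →
        Λtot f ≤ ∫ p, f p ∂ν' + ε * (2 * V) ∧
          ∫ p, f p ∂ν' ≤ Λtot f + ε * (2 * V) := by
      intro ε hε
      set N2 : ℕ := ⌈M / ε⌉₊ + 1 with hN2def
      have hNε : M ≤ ((N2 + 2 : ℕ) : ℝ) * ε := by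
        have h1 : M / ε ≤ (⌈M / ε⌉₊ : ℝ) := Nat.le_ceil _
        have h2 : ((⌈M / ε⌉₊ : ℕ) : ℝ) ≤ ((N2 + 2 : ℕ) : ℝ) := by
          rw [hN2def]; push_cast; linarith
        exact (div_le_iff₀ hε).1 (h1.trans h2)
      set g : ℕ → G → ℝ := fun k p => min (max (f p - (k : ℝ) * ε) 0) ε with hgdef
      have hgc : ∀ k, Continuous (g k) := fun k =>
        ((hf.sub continuous_const).max continuous_const).min continuous_const
      have hg_nonneg : ∀ k p, 0 ≤ g k p := fun k p => le_min (le_max_right _ _) hε.le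
      have hg_le : ∀ k p, g k p ≤ ε := fun k p => min_le_right _ _
      have hg_supp0 : ∀ k p, p ∉ tsupport f → g k p = 0 := by
        intro k p hp
        have hfp : f p = 0 := image_eq_zero_of_notMem_tsupport hp
        show min (max (f p - (k : ℝ) * ε) 0) ε = 0
        have hk0 : (0 : ℝ) ≤ (k : ℝ) * ε := by positivity
        rw [hfp, zero_sub, max_eq_right (by linarith), min_eq_left hε.le]
      have hgcs : ∀ k, HasCompactSupport (g k) := by
        intro k
        apply hfs.mono'
        intro p hp
        by_contra hc
        exact hp (hg_supp0 k p hc)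
      have hg_int : ∀ k, Integrable (g k) ν' := fun k =>
        (hgc k).integrable_of_hasCompactSupport (hgcs k)
      have hsum : ∀ p, ∑ k ∈ Finset.range (N2 + 2), g k p = f p := by
        intro p
        have hfpM : f p ≤ ((N2 + 2 : ℕ) : ℝ) * ε :=
          le_trans (le_trans (le_abs_self _) (hM p)) hNε
        show (∑ k ∈ Finset.range (N2 + 2), min (max (f p - (k : ℝ) * ε) 0) ε) = f p
        rw [sum_clamp hε.le (hf0' p) (N2 + 2), min_eq_left hfpM]
      set S : ℕ → Set G := fun k => tsupport f ∩ {p | (k : ℝ) * ε ≤ f p} with hSdef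
      have hS_comp : ∀ k, IsCompact (S k) := fun k =>
        hfs.inter_right (isClosed_le continuous_const hf)
      have hS_meas : ∀ k, MeasurableSet (S k) := fun k => (hS_comp k).isClosed.measurableSet
      have hS_sub : ∀ k, S k ⊆ tsupport f := fun k => Set.inter_subset_left
      have hg_eq_eps : ∀ k, ∀ p ∈ S (k + 1), g k p = ε := by
        intro k p hp
        have h2 : ((k + 1 : ℕ) : ℝ) * ε ≤ f p := hp.2
        have h3 : ε ≤ f p - (k : ℝ) * ε := by push_cast at h2; nlinarith
        show min (max (f p - (k : ℝ) * ε) 0) ε = ε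
        rw [max_eq_left (by linarith), min_eq_right h3]
      have hg_zero : ∀ k, ∀ p, p ∉ S k → g k p = 0 := by
        intro k p hp
        by_cases hts : p ∈ tsupport f
        · have h2 : ¬ ((k : ℝ) * ε ≤ f p) := fun hc => hp ⟨hts, hc⟩
          push_neg at h2
          show min (max (f p - (k : ℝ) * ε) 0) ε = 0
          rw [max_eq_right (by linarith), min_eq_left hε.le]
        · exact hg_supp0 k p hts
      have hI2 : ∀ k, ε * (ν' (S (k + 1))).toReal ≤ ∫ p, g k p ∂ν' := by
        intro k
        have hstep1 : ∫ p in S (k + 1), g k p ∂ν' ≤ ∫ p, g k p ∂ν' :=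
          MeasureTheory.setIntegral_le_integral (hg_int k)
            (Filter.Eventually.of_forall fun p => hg_nonneg k p)
        have hstep2 : ∫ p in S (k + 1), g k p ∂ν' = ε * (ν' (S (k + 1))).toReal := by
          rw [MeasureTheory.setIntegral_congr_fun (hS_meas (k + 1))
            (fun p hp => hg_eq_eps k p hp), MeasureTheory.setIntegral_const,
            smul_eq_mul, mul_comm, MeasureTheory.measureReal_def]
        linarith
      have hI3 : ∀ k, ∫ p, g k p ∂ν' ≤ ε * (ν' (S k)).toReal := by
        intro k
        have hstep1 : ∫ p, g k p ∂ν' = ∫ p in S k, g k p ∂ν' :=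
          (MeasureTheory.setIntegral_eq_integral_of_forall_compl_eq_zero
            (fun p hp => hg_zero k p hp)).symm
        have hfin : ν' (S k) < ⊤ := Ne.lt_top (hν'K _ (hS_comp k))
        have hstep2 : ∫ p in S k, g k p ∂ν' ≤ ∫ p in S k, (ε : ℝ) ∂ν' :=
          MeasureTheory.setIntegral_mono_on ((hg_int k).integrableOn)
            (MeasureTheory.integrableOn_const hfin.ne)
            (hS_meas k) (fun p _ => hg_le k p)
        have hstep3 : ∫ p in S k, (ε : ℝ) ∂ν' = ε * (ν' (S k)).toReal := by
          rw [MeasureTheory.setIntegral_const, smul_eq_mul, mul_comm, MeasureTheory.measureReal_def]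
        linarith
      have hI4 : ∀ k, ε * lam (S (k + 1)) ≤ Λtot (g k) := by
        intro k
        have hadm : lam (S (k + 1)) ≤ Λtot (fun p => ε⁻¹ * g k p) := by
          apply hlam_le _ (fun p => ε⁻¹ * g k p) (continuous_const.mul (hgc k))
            ((hgcs k).mono' ((Function.support_mul_subset_right _ _).trans
              (subset_tsupport _)))
            (fun p => mul_nonneg (by positivity) (hg_nonneg k p))
          intro p hp
          rw [hg_eq_eps k p hp, inv_mul_cancel₀ hε.ne']
        rw [hΛsmul ε⁻¹ (g k) (hgc k) (hgcs k)] at hadm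
        have hmul := mul_le_mul_of_nonneg_left hadm hε.le
        rwa [← mul_assoc, mul_inv_cancel₀ hε.ne', one_mul] at hmul
      have hI5 : ∀ k, Λtot (g k) ≤ ε * lam (S k) := by
        intro k
        have hlb : Λtot (g k) * ε⁻¹ ≤ lam (S k) := by
          apply le_csInf (hAdmNe _ (hS_comp k))
          rintro t ⟨g', hg'c, hg's, hg'0, hg'1, rfl⟩
          have hle : ∀ p, g k p ≤ ε * g' p := by
            intro p
            by_cases hp : p ∈ S k
            · calc g k p ≤ ε := hg_le k p
                _ = ε * 1 := (mul_one ε).symm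
                _ ≤ ε * g' p := mul_le_mul_of_nonneg_left (hg'1 p hp) hε.le
            · rw [hg_zero k p hp]
              exact mul_nonneg hε.le (hg'0 p)
          have hg'cs2 : HasCompactSupport (fun p => ε * g' p) :=
            hg's.mono' ((Function.support_mul_subset_right _ _).trans (subset_tsupport _))
          have hmono2 := hΛmono (g k) (fun p => ε * g' p) (hgc k) (hgcs k)
            (continuous_const.mul hg'c) hg'cs2 hle
          rw [hΛsmul ε g' hg'c hg's] at hmono2
          calc Λtot (g k) * ε⁻¹ ≤ (ε * Λtot g') * ε⁻¹ :=
                mul_le_mul_of_nonneg_right hmono2 (by positivity)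
            _ = Λtot g' := by field_simp
        have hmul := mul_le_mul_of_nonneg_left hlb hε.le
        calc Λtot (g k) = ε * (Λtot (g k) * ε⁻¹) := by field_simp
          _ ≤ ε * lam (S k) := hmul
      have hI6 : ∀ k, (ν' (S (k + 1))).toReal ≤ lam (S k) := by
        intro k
        apply hP1 _ _ (hS_comp (k + 1)) (hS_comp k)
        have hopen : IsOpen {p : G | (k : ℝ) * ε < f p} := isOpen_lt continuous_const hf
        have hsub2 : S (k + 1) ⊆ {p : G | (k : ℝ) * ε < f p} := by
          rintro p ⟨_, hp2⟩
          have h2 : ((k + 1 : ℕ) : ℝ) * ε ≤ f p := hp2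
          push_cast at h2
          simp only [Set.mem_setOf_eq]
          nlinarith
        have hsub3 : {p : G | (k : ℝ) * ε < f p} ⊆ S k := by
          intro p hp
          simp only [Set.mem_setOf_eq] at hp
          have hk0 : (0 : ℝ) ≤ (k : ℝ) * ε := by positivity
          refine ⟨subset_tsupport _ ?_, le_of_lt hp⟩
          rw [Function.mem_support]
          intro h0
          rw [h0] at hp
          linarith
        exact hsub2.trans (interior_maximal hsub3 hopen)
      set U : ℕ → Set G := fun k =>
        {p : G | ((k : ℝ) - 1) * ε < f p} ∩ Metric.ball 1 ((n : ℝ) + 2) with hUdef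
      have hUopen : ∀ k, IsOpen (U k) := fun k =>
        (isOpen_lt continuous_const hf).inter Metric.isOpen_ball
      have hUfin : ∀ k, ν' (U k) ≠ ⊤ := by
        intro k
        have hle2 : ν' (U k) ≤ ν' (closedBall 1 ((n : ℝ) + 2)) :=
          measure_mono (Set.inter_subset_right.trans Metric.ball_subset_closedBall)
        exact (lt_of_le_of_lt hle2 (Ne.lt_top (hν'K _ (isCompact_closedBall _ _)))).ne
      have hν'UV : ∀ k, (ν' (U k)).toReal ≤ V := fun k =>
        hworth _ (Set.inter_subset_right.trans Metric.ball_subset_closedBall)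
      have hI7 : ∀ k : ℕ, lam (S k) ≤ (ν' (U k)).toReal := by
        intro k
        apply hP2 _ _ (hS_comp k) (hUopen k) ?_ (hUfin k)
        rintro p ⟨hp1, hp2⟩
        refine ⟨?_, ?_⟩
        · simp only [Set.mem_setOf_eq]
          have h2 : (k : ℝ) * ε ≤ f p := hp2
          nlinarith
        · have hd := hnsupp hp1
          rw [mem_closedBall] at hd
          rw [Metric.mem_ball]
          linarith
      have hU_sub : ∀ k : ℕ, U (k + 2) ⊆ S (k + 1) := by
        intro k p hp
        obtain ⟨hp1, _⟩ := hp
        simp only [Set.mem_setOf_eq] at hp1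
        have hcast : (((k + 2 : ℕ) : ℝ) - 1) * ε = ((k + 1 : ℕ) : ℝ) * ε := by
          push_cast; ring
        rw [hcast] at hp1
        refine ⟨subset_tsupport _ ?_, hp1.le⟩
        rw [Function.mem_support]
        have hk0 : (0 : ℝ) ≤ ((k + 1 : ℕ) : ℝ) * ε := by positivity
        intro h0
        rw [h0] at hp1
        linarith
      have hIsum : ∫ p, f p ∂ν' = ∑ k ∈ Finset.range (N2 + 2), ∫ p, g k p ∂ν' := by
        rw [← MeasureTheory.integral_finset_sum _ (fun k _ => hg_int k)]
        exact integral_congr_ae (Filter.Eventually.of_forall fun p => (hsum p).symm)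
      have hΛsum : Λtot f = ∑ k ∈ Finset.range (N2 + 2), Λtot (g k) := by
        have hTs : Tendsto (fun i => ∫ p, f p ∂(m i)) atTop
            (𝓝 (∑ k ∈ Finset.range (N2 + 2), Λtot (g k))) := by
          have h2 : Tendsto (fun i => ∑ k ∈ Finset.range (N2 + 2), ∫ p, g k p ∂(m i)) atTop
              (𝓝 (∑ k ∈ Finset.range (N2 + 2), Λtot (g k))) :=
            tendsto_finset_sum _ (fun k _ => hΛm (g k) (hgc k) (hgcs k))
          refine h2.congr fun i => ?_
          haveI := hmfmoc i
          rw [← MeasureTheory.integral_finset_sum _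
            (fun k _ => (hgc k).integrable_of_hasCompactSupport (hgcs k))]
          exact integral_congr_ae (Filter.Eventually.of_forall fun p => hsum p)
        exact tendsto_nhds_unique (hΛm f hf hfs) hTs
      have hΛg_nonneg : ∀ k, 0 ≤ Λtot (g k) := fun k =>
        hΛnonneg _ (hgc k) (hgcs k) (fun p => hg_nonneg k p)
      have hint_nonneg : ∀ k, 0 ≤ ∫ p, g k p ∂ν' := fun k =>
        MeasureTheory.integral_nonneg (fun p => hg_nonneg k p)
      have hSball : ∀ k, S k ⊆ closedBall 1 ((n : ℝ) + 2) := fun k =>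
        (hS_sub k).trans (hnsupp.trans (closedBall_subset_closedBall (by linarith)))
      have hν'SV : ∀ k, (ν' (S k)).toReal ≤ V := fun k => hworth _ (hSball k)
      have hS0V : lam (S 0) ≤ V := by
        have hball2 : S 0 ⊆ Metric.ball 1 ((n : ℝ) + 2) := by
          intro p hp
          have hd := hnsupp (hS_sub 0 hp)
          rw [mem_closedBall] at hd
          rw [Metric.mem_ball]
          linarith
        have hfin2 : ν' (Metric.ball 1 ((n : ℝ) + 2)) ≠ ⊤ := by
          have hle2 : ν' (Metric.ball 1 ((n : ℝ) + 2)) ≤ ν' (closedBall 1 ((n : ℝ) + 2)) :=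
            measure_mono Metric.ball_subset_closedBall
          exact (lt_of_le_of_lt hle2 (Ne.lt_top (hν'K _ (isCompact_closedBall _ _)))).ne
        refine (hP2 (S 0) _ (hS_comp 0) Metric.isOpen_ball hball2 hfin2).trans ?_
        exact ENNReal.toReal_mono (hν'K _ (isCompact_closedBall _ _))
          (measure_mono Metric.ball_subset_closedBall)
      -- upper chain
      constructor
      · have u2 : ∑ k ∈ Finset.range (N2 + 2), Λtot (g k) ≤
            ∑ k ∈ Finset.range (N2 + 2), ε * lam (S k) :=
          Finset.sum_le_sum (fun k _ => hI5 k)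
        have u3 : ∑ k ∈ Finset.range (N2 + 2), ε * lam (S k) =
            (∑ k ∈ Finset.range (N2 + 1), ε * lam (S (k + 1))) + ε * lam (S 0) :=
          Finset.sum_range_succ' (fun k => ε * lam (S k)) (N2 + 1)
        have u4 : ∑ k ∈ Finset.range (N2 + 1), ε * lam (S (k + 1)) ≤
            ∑ k ∈ Finset.range (N2 + 1), ε * (ν' (U (k + 1))).toReal :=
          Finset.sum_le_sum (fun k _ =>
            mul_le_mul_of_nonneg_left (hI7 (k + 1)) hε.le)
        have u5 : ∑ k ∈ Finset.range (N2 + 1), ε * (ν' (U (k + 1))).toReal =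
            (∑ k ∈ Finset.range N2, ε * (ν' (U (k + 2))).toReal) + ε * (ν' (U 1)).toReal :=
          Finset.sum_range_succ' (fun k => ε * (ν' (U (k + 1))).toReal) N2
        have u6 : ∑ k ∈ Finset.range N2, ε * (ν' (U (k + 2))).toReal ≤
            ∑ k ∈ Finset.range N2, ε * (ν' (S (k + 1))).toReal :=
          Finset.sum_le_sum (fun k _ => mul_le_mul_of_nonneg_left
            (ENNReal.toReal_mono (hν'K _ (hS_comp (k + 1)))
              (measure_mono (hU_sub k))) hε.le)
        have u7 : ∑ k ∈ Finset.range N2, ε * (ν' (S (k + 1))).toReal ≤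
            ∑ k ∈ Finset.range N2, ∫ p, g k p ∂ν' :=
          Finset.sum_le_sum (fun k _ => hI2 k)
        have u8 : ∑ k ∈ Finset.range N2, ∫ p, g k p ∂ν' ≤
            ∑ k ∈ Finset.range (N2 + 2), ∫ p, g k p ∂ν' :=
          Finset.sum_le_sum_of_subset_of_nonneg
            (Finset.range_subset_range.2 (by omega)) (fun k _ _ => hint_nonneg k)
        have u10 : ε * (ν' (U 1)).toReal ≤ ε * V :=
          mul_le_mul_of_nonneg_left (hν'UV 1) hε.le
        have u11 : ε * lam (S 0) ≤ ε * V := mul_le_mul_of_nonneg_left hS0V hε.le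
        rw [hΛsum, hIsum]
        linarith
      · have l2 : ∑ k ∈ Finset.range (N2 + 2), ∫ p, g k p ∂ν' ≤
            ∑ k ∈ Finset.range (N2 + 2), ε * (ν' (S k)).toReal :=
          Finset.sum_le_sum (fun k _ => hI3 k)
        have l3 : ∑ k ∈ Finset.range (N2 + 2), ε * (ν' (S k)).toReal =
            (∑ k ∈ Finset.range (N2 + 1), ε * (ν' (S (k + 1))).toReal) +
              ε * (ν' (S 0)).toReal :=
          Finset.sum_range_succ' (fun k => ε * (ν' (S k)).toReal) (N2 + 1)
        have l4 : ∑ k ∈ Finset.range (N2 + 1), ε * (ν' (S (k + 1))).toReal ≤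
            ∑ k ∈ Finset.range (N2 + 1), ε * lam (S k) :=
          Finset.sum_le_sum (fun k _ => mul_le_mul_of_nonneg_left (hI6 k) hε.le)
        have l5 : ∑ k ∈ Finset.range (N2 + 1), ε * lam (S k) =
            (∑ k ∈ Finset.range N2, ε * lam (S (k + 1))) + ε * lam (S 0) :=
          Finset.sum_range_succ' (fun k => ε * lam (S k)) N2
        have l6 : ∑ k ∈ Finset.range N2, ε * lam (S (k + 1)) ≤
            ∑ k ∈ Finset.range N2, Λtot (g k) :=
          Finset.sum_le_sum (fun k _ => hI4 k)
        have l7 : ∑ k ∈ Finset.range N2, Λtot (g k) ≤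
            ∑ k ∈ Finset.range (N2 + 2), Λtot (g k) :=
          Finset.sum_le_sum_of_subset_of_nonneg
            (Finset.range_subset_range.2 (by omega)) (fun k _ _ => hΛg_nonneg k)
        have l9 : ε * (ν' (S 0)).toReal ≤ ε * V :=
          mul_le_mul_of_nonneg_left (hν'SV 0) hε.le
        have l10 : ε * lam (S 0) ≤ ε * V := mul_le_mul_of_nonneg_left hS0V hε.le
        rw [hΛsum, hIsum]
        linarith
    have h1le : Λtot f ≤ ∫ p, f p ∂ν' := by
      refine le_of_forall_pos_le_add fun ε' hε' => ?_
      obtain ⟨hu, -⟩ := hkey (ε' / (2 * V + 1)) (by positivity)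
      have hb2 : (ε' / (2 * V + 1)) * (2 * V) ≤ ε' := by
        rw [div_mul_eq_mul_div, div_le_iff₀ (by positivity)]
        nlinarith
      linarith
    have h2le : ∫ p, f p ∂ν' ≤ Λtot f := by
      refine le_of_forall_pos_le_add fun ε' hε' => ?_
      obtain ⟨-, hu⟩ := hkey (ε' / (2 * V + 1)) (by positivity)
      have hb2 : (ε' / (2 * V + 1)) * (2 * V) ≤ ε' := by
        rw [div_mul_eq_mul_div, div_le_iff₀ (by positivity)]
        nlinarith
      linarith
    exact le_antisymm h2le h1le
  -- representation for general functions
  have hrep : ∀ f : G → ℝ, Continuous f → HasCompactSupport f →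
      ∫ p, f p ∂ν' = Λtot f := by
    intro f hf hfs
    set fp : G → ℝ := fun p => max (f p) 0 with hfpdef
    set fm : G → ℝ := fun p => max (-f p) 0 with hfmdef
    have hfpc : Continuous fp := hf.max continuous_const
    have hfmc : Continuous fm := hf.neg.max continuous_const
    have hfps : HasCompactSupport fp := by
      apply hfs.mono'
      intro p hp
      rw [Function.mem_support] at hp
      apply subset_tsupport
      rw [Function.mem_support]
      intro h0
      apply hp
      show max (f p) 0 = 0
      rw [h0, max_self]
    have hfms : HasCompactSupport fm := by
      apply hfs.mono'
      intro p hp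
      rw [Function.mem_support] at hp
      apply subset_tsupport
      rw [Function.mem_support]
      intro h0
      apply hp
      show max (-f p) 0 = 0
      rw [h0, neg_zero, max_self]
    have hdiff : ∀ p, f p = fp p - fm p := by
      intro p
      show f p = max (f p) 0 - max (-f p) 0
      rcases le_total (f p) 0 with hc | hc
      · rw [max_eq_right hc, max_eq_left (by linarith)]; ring
      · rw [max_eq_left hc, max_eq_right (by linarith)]; ring
    have hint2 : ∫ p, f p ∂ν' = ∫ p, fp p ∂ν' - ∫ p, fm p ∂ν' := by
      rw [← MeasureTheory.integral_sub (hfpc.integrable_of_hasCompactSupport hfps)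
        (hfmc.integrable_of_hasCompactSupport hfms)]
      exact integral_congr_ae (Filter.Eventually.of_forall fun p => hdiff p)
    have hΛf : Λtot f = Λtot fp - Λtot fm := by
      have hT : Tendsto (fun i => ∫ p, f p ∂(m i)) atTop (𝓝 (Λtot fp - Λtot fm)) := by
        have h2 := (hΛm fp hfpc hfps).sub (hΛm fm hfmc hfms)
        refine h2.congr fun i => ?_
        haveI := hmfmoc i
        rw [← MeasureTheory.integral_sub (hfpc.integrable_of_hasCompactSupport hfps)
          (hfmc.integrable_of_hasCompactSupport hfms)]
        exact integral_congr_ae (Filter.Eventually.of_forall fun p => (hdiff p).symm)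
      exact tendsto_nhds_unique (hΛm f hf hfs) hT
    rw [hint2, hΛf, hrep0 fp hfpc hfps (fun p => le_max_right _ _),
      hrep0 fm hfmc hfms (fun p => le_max_right _ _)]
  -- conclusion
  refine ⟨σ, hσmono, ν', ⟨fun i => ρ (σ i), fun i => hρpos (σ i), ?_, ?_⟩, ?_⟩
  · refine squeeze_zero (fun i => (hρpos (σ i)).le) (fun i => hρone (σ i)) htend0
  · intro f hf hfs
    rw [hrep f hf hfs]
    exact hΛm f hf hfs
  · intro f hf hfs
    rw [hrep f hf hfs]
    exact hΛν f hf hfs
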